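/- arXiv:2002.07107 — 3 statements merged into one kernel-verified Lean document; each statement's English description precedes it below -/
import Mathlib

section
/- For D a southwest diagram and c any column index, the diagram R_c^*(D), obtained by applying the rectification operator R_c to D repeatedly until it acts trivially, is also southwest. In particular, rect(D) is a composition diagram. -/
/-!
Definitions for Kohnert diagrams, Kohnert crystals, rectification, Kohnert labelings,
Demazure characters and Kohnert polynomials, following Assaf,
"Demazure crystals for Kohnert polynomials".
-/

namespace Kohnert

/-- A cell `(c, r)` records a column index `c` and a row index `r`. -/
abbrev Cell : Type := ℕ × ℕ

/-- A diagram is a finite set of cells whose coordinates are at least `1`. -/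
def IsDiagram (D : Finset Cell) : Prop := ∀ x ∈ D, 1 ≤ x.1 ∧ 1 ≤ x.2

/-- A diagram is southwest if whenever `(c₁,r₂)` and `(c₂,r₁)` are cells with
`r₁ < r₂` and `c₁ < c₂`, then `(c₁,r₁)` is also a cell. -/
def Southwest (D : Finset Cell) : Prop :=
  ∀ c₁ c₂ r₁ r₂, (c₁, r₂) ∈ D → (c₂, r₁) ∈ D → r₁ < r₂ → c₁ < c₂ → (c₁, r₁) ∈ D

/-- The weight of a diagram: its `r`-th entry is the number of cells in row `r`. -/
noncomputable def wt (T : Finset Cell) : ℕ →₀ ℕ := ∑ x ∈ T, Finsupp.single x.2 1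

/-- A single Kohnert move: the rightmost cell `(c,r)` of some row moves down within its
column to the highest empty position `(c,r')` below it (jumping over occupied positions
as needed), provided such a position with `r' ≥ 1` exists. -/
def KohnertMove (T S : Finset Cell) : Prop :=
  ∃ c r r', (c, r) ∈ T ∧ (∀ c', (c', r) ∈ T → c' ≤ c) ∧
    1 ≤ r' ∧ r' < r ∧ (c, r') ∉ T ∧ (∀ s, r' < s → s < r → (c, s) ∈ T) ∧
    S = insert (c, r') (T.erase (c, r))

/-- `KD D` is the set of diagrams obtainable from `D` by a (possibly empty) sequence of
Kohnert moves. -/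
def KD (D : Finset Cell) : Set (Finset Cell) := {T | Relation.ReflTransGen KohnertMove D T}

/-! ### Row pairing and the crystal raising and lowering operators -/

/-- Columns of the cells of row `i+1` having no cell of row `i` below them. -/
def freeUpCols (T : Finset Cell) (i : ℕ) : Finset ℕ :=
  (T.filter fun x => x.2 = i + 1 ∧ (x.1, i) ∉ T).image Prod.fst

/-- Columns of the cells of row `i` having no cell of row `i+1` above them. -/
def freeDownCols (T : Finset Cell) (i : ℕ) : Finset ℕ :=
  (T.filter fun x => x.2 = i ∧ (x.1, i + 1) ∉ T).image Prod.fst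

/-- The cell `(c, i+1)` of `T` is not `i`-paired: cells of rows `i` and `i+1` in a common
column are `i`-paired with each other, and the remaining cells are matched by the
iterative rule pairing a cell of row `i` with a cell of row `i+1` strictly to its right
whenever all cells of the two rows strictly between them are already `i`-paired.  This is
the standard bracketing characterization of the resulting matching. -/
def UnpairedUp (T : Finset Cell) (i c : ℕ) : Prop :=
  (c, i + 1) ∈ T ∧ (c, i) ∉ T ∧
    ((freeDownCols T i).filter (fun d => d < c)).card <
      ((freeUpCols T i).filter (fun d => d ≤ c)).card

/-- The cell `(c, i)` of `T` is not `i`-paired. -/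
def UnpairedDown (T : Finset Cell) (i c : ℕ) : Prop :=
  (c, i) ∈ T ∧ (c, i + 1) ∉ T ∧
    ((freeUpCols T i).filter (fun d => c < d)).card <
      ((freeDownCols T i).filter (fun d => c ≤ d)).card

/-- A cell of `T` lying in row `i` or `i+1` is `i`-paired. -/
def RowPaired (T : Finset Cell) (i : ℕ) (x : Cell) : Prop :=
  x ∈ T ∧ ((x.2 = i + 1 ∧ ¬ UnpairedUp T i x.1) ∨ (x.2 = i ∧ ¬ UnpairedDown T i x.1))

open Classical in
/-- The raising operator `e_i`: move the rightmost non-`i`-paired cell of row `i+1`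
down to row `i`, staying within its column; if every cell of row `i+1` is `i`-paired,
the result is `none` (that is, `e_i(T) = 0`). -/
noncomputable def raise (i : ℕ) (T : Finset Cell) : Option (Finset Cell) :=
  if ∃ c, UnpairedUp T i c then
    some (insert (sSup {c | UnpairedUp T i c}, i) (T.erase (sSup {c | UnpairedUp T i c}, i + 1)))
  else none

open Classical in
/-- The lowering operator `f_i` relative to `D`: move the leftmost non-`i`-paired cell of
row `i` up to row `i+1`, staying within its column, provided the result lies in `KD D`;
otherwise the result is `none` (that is, `f_i(T) = 0`). -/
noncomputable def lower (D : Finset Cell) (i : ℕ) (T : Finset Cell) : Option (Finset Cell) :=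
  if ∃ c, UnpairedDown T i c then
    if insert (sInf {c | UnpairedDown T i c}, i + 1)
        (T.erase (sInf {c | UnpairedDown T i c}, i)) ∈ KD D then
      some (insert (sInf {c | UnpairedDown T i c}, i + 1)
        (T.erase (sInf {c | UnpairedDown T i c}, i)))
    else none
  else none

/-- One raising-operator step. -/
def RaiseStep (T S : Finset Cell) : Prop := ∃ i, 1 ≤ i ∧ raise i T = some S

/-- A highest weight diagram: every raising operator vanishes on it. -/
def HighestWeight (U : Finset Cell) : Prop := ∀ r, 1 ≤ r → raise r U = none

/-- The equivalence relation generated by `T ∼ e_i(T)` whenever `e_i(T) ≠ 0`. -/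
def CrystalEquiv : Finset Cell → Finset Cell → Prop := Relation.EqvGen RaiseStep

/-- `K` is a connected component of the Kohnert crystal on `KD D`. -/
def IsComponent (D : Finset Cell) (K : Set (Finset Cell)) : Prop :=
  ∃ T₀ ∈ KD D, K = {S | S ∈ KD D ∧ CrystalEquiv S T₀}

/-! ### Column pairing and rectification -/

/-- Rows of the cells of column `c` having no cell of column `c+1` in their row. -/
def freeLeftRows (T : Finset Cell) (c : ℕ) : Finset ℕ :=
  (T.filter fun x => x.1 = c ∧ (c + 1, x.2) ∉ T).image Prod.snd

/-- Rows of the cells of column `c+1` having no cell of column `c` in their row. -/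
def freeRightRows (T : Finset Cell) (c : ℕ) : Finset ℕ :=
  (T.filter fun x => x.1 = c + 1 ∧ (c, x.2) ∉ T).image Prod.snd

/-- The cell `(c+1, r)` of `T` is not column `c`-paired: cells of columns `c` and `c+1`
in a common row are paired with each other, and the remaining cells are matched by the
iterative rule pairing a cell of column `c+1` with a cell of column `c` strictly above it
whenever all cells of the two columns strictly between them are already paired. -/
def ColUnpaired (T : Finset Cell) (c r : ℕ) : Prop :=
  (c + 1, r) ∈ T ∧ (c, r) ∉ T ∧
    ((freeLeftRows T c).filter (fun s => r < s)).card <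
      ((freeRightRows T c).filter (fun s => r ≤ s)).card

open Classical in
/-- The rectification operator `R_c`: move the lowest non-column-`c`-paired cell of
column `c+1` left to column `c`, staying within its row; if every cell of column `c+1`
is column `c`-paired, do nothing. -/
noncomputable def rectify (c : ℕ) (T : Finset Cell) : Finset Cell :=
  if ∃ r, ColUnpaired T c r then
    insert (c, sInf {r | ColUnpaired T c r}) (T.erase (c + 1, sInf {r | ColUnpaired T c r}))
  else T

/-- `R_c^*`: apply `R_c` until it acts trivially (at most `T.card` nontrivial
applications are possible, since each moves a distinct cell of column `c+1`). -/
noncomputable def rectifyStar (c : ℕ) (T : Finset Cell) : Finset Cell := (rectify c)^[T.card] T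

/-- A diagram is rectified: for all `c, r ≥ 1`,
`#{s ≥ r : (c,s) ∈ T} ≥ #{s ≥ r : (c+1,s) ∈ T}`. -/
def Rectified (T : Finset Cell) : Prop :=
  ∀ c r, 1 ≤ c → 1 ≤ r →
    (T.filter fun x => x.1 = c + 1 ∧ r ≤ x.2).card ≤ (T.filter fun x => x.1 = c ∧ r ≤ x.2).card

/-- One rectification-operator step. -/
def RectStep (T S : Finset Cell) : Prop := ∃ c, 1 ≤ c ∧ S = rectify c T

open Classical in
/-- The rectification of a diagram: the (unique) rectified diagram obtained by applying
rectification operators, in any order, until all act trivially. -/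
noncomputable def rect (T : Finset Cell) : Finset Cell :=
  if h : ∃ S, Relation.ReflTransGen RectStep T S ∧ Rectified S then h.choose else T

/-- `T` is the composition diagram `{(c,r) : 1 ≤ c ≤ a r}` of the weak composition `a`. -/
def IsCompDiagramOf (T : Finset Cell) (a : ℕ → ℕ) : Prop :=
  ∀ c r, (c, r) ∈ T ↔ 1 ≤ c ∧ 1 ≤ r ∧ c ≤ a r

/-- `T` is a composition diagram. -/
def IsCompositionDiagram (T : Finset Cell) : Prop := ∃ a : ℕ → ℕ, IsCompDiagramOf T a

/-! ### Labelings of diagrams -/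

/-- A labeling assigns an integer label to each cell of a diagram. -/
abbrev Labeling := Cell → ℕ

/-- A labeling is flagged if every cell in row `r` has label at least `r`. -/
def Flagged (T : Finset Cell) (L : Labeling) : Prop := ∀ x ∈ T, x.2 ≤ L x

/-- The diagram `𝔻(L)` recording the labels: a cell `(c, r)` whenever column `c` of `T`
contains a cell labeled `r`. -/
def labelDiagram (T : Finset Cell) (L : Labeling) : Finset Cell := T.image fun x => (x.1, L x)

/-- The set of rows of the cells of column `c`. -/
def colRows (T : Finset Cell) (c : ℕ) : Finset ℕ := (T.filter fun x => x.1 = c).image Prod.snd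

/-- The element of `s` maximizing `f` (taking the largest such element). -/
noncomputable def argmaxIn (f : ℕ → ℕ) (s : Finset ℕ) : Option ℕ :=
  if h : s.Nonempty then
    some ((s.filter fun a => f a = s.sup' h f).max' (by
      obtain ⟨b, hb, he⟩ := Finset.exists_mem_eq_sup' h f
      exact ⟨b, Finset.mem_filter.2 ⟨hb, he.symm⟩⟩))
  else none

/-- Greedy label `c`-pairing: process the rows of column `c+1` in the given order; the
cell in row `r` is paired with the still-available cell of column `c` lying weakly above
it whose label is largest among those with label at most `L (c+1, r)`, if one exists. -/
noncomputable def labelPairList (L : Labeling) (c : ℕ) :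
    List ℕ → Finset ℕ → List (ℕ × Option ℕ)
  | [], _ => []
  | r :: rs, avail =>
    match argmaxIn (fun s => L (c, s)) (avail.filter fun s => r ≤ s ∧ L (c, s) ≤ L (c + 1, r)) with
    | none => (r, none) :: labelPairList L c rs avail
    | some s => (r, some s) :: labelPairList L c rs (avail.erase s)

/-- The label `c`-pairing of `T` with respect to `L`, processing the cells of column
`c+1` from top to bottom. -/
noncomputable def labelPairing (L : Labeling) (T : Finset Cell) (c : ℕ) : List (ℕ × Option ℕ) :=
  labelPairList L c (((colRows T (c + 1)).sort (· ≤ ·)).reverse) (colRows T c)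

/-- The row of the cell of column `c` label `c`-paired with the cell `(c+1, r)`, if any. -/
noncomputable def labelPartner (L : Labeling) (T : Finset Cell) (c r : ℕ) : Option ℕ :=
  ((labelPairing L T c).lookup r).join

open Classical in
/-- The swapping pass in the construction of the rectified labeling: for each label
`c`-unpaired cell `x` of column `c+1` (processed from highest to lowest), if there are
label `c`-paired cells `y` (in column `c`) and `z` (in column `c+1`) with `z` above `x`
and `L(y) ≤ L'(x) < L'(z)`, swap the labels of `x` and such `z` with `L'(z)` maximal. -/
noncomputable def swapPass (L0 : Labeling) (T : Finset Cell) (c : ℕ) :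
    List ℕ → Labeling → Labeling
  | [], L' => L'
  | r :: rs, L' =>
    match argmaxIn (fun s => L' (c + 1, s)) ((colRows T (c + 1)).filter fun s =>
        r < s ∧ ∃ t ∈ colRows T c, labelPartner L0 T c s = some t ∧
          L0 (c, t) ≤ L' (c + 1, r) ∧ L' (c + 1, r) < L' (c + 1, s)) with
    | none => swapPass L0 T c rs L'
    | some z => swapPass L0 T c rs
        (Function.update (Function.update L' (c + 1, r) (L' (c + 1, z))) (c + 1, z) (L' (c + 1, r)))

/-- The label `c`-unpaired rows of column `c+1`, from highest to lowest. -/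
noncomputable def unpairedDesc (L : Labeling) (T : Finset Cell) (c : ℕ) : List ℕ :=
  (((colRows T (c + 1)).filter fun r => labelPartner L T c r = none).sort (· ≤ ·)).reverse

open Classical in
/-- The relabeling `L'` of `T` at column `c`: perform the swapping pass on the label
`c`-unpaired cells of column `c+1`, then give every label `c`-paired cell of column
`c+1` the label of its partner in column `c`. -/
noncomputable def relabel (L : Labeling) (T : Finset Cell) (c : ℕ) : Labeling :=
  fun x =>
    if x.1 = c + 1 ∧ x ∈ T then
      match labelPartner L T c x.2 with
      | some t => L (c, t)
      | none => swapPass L T c (unpairedDesc L T c) L x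
    else L x

open Classical in
/-- The rectified labeling `R_c^*(L)` of `R_c^*(T)`: cells moved from column `c+1` to
column `c` under rectification carry their relabeled labels with them. -/
noncomputable def rectifyStarLabel (L : Labeling) (T : Finset Cell) (c : ℕ) : Labeling :=
  fun x =>
    if x.1 = c ∧ x ∉ T ∧ (c + 1, x.2) ∈ T ∧ x ∈ rectifyStar c T then
      relabel L T c (c + 1, x.2)
    else relabel L T c x

/-- Labeled rectification at column `c`. -/
noncomputable def rectStarLab (c : ℕ) (p : Finset Cell × Labeling) : Finset Cell × Labeling :=
  (rectifyStar c p.1, rectifyStarLabel p.2 p.1 c)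

/-- Apply labeled rectification at each of the given columns in order. -/
noncomputable def sweepLab (cols : List ℕ) (p : Finset Cell × Labeling) :
    Finset Cell × Labeling :=
  cols.foldl (fun q c => rectStarLab c q) p

/-- The fully rectified labeled diagram, rectifying columns from the rightmost down to
column `lo` and iterating until stable. -/
noncomputable def rectLabFrom (lo : ℕ) (p : Finset Cell × Labeling) : Finset Cell × Labeling :=
  (fun q => sweepLab ((List.range' lo (p.1.sup Prod.fst + 1 - lo)).reverse) q)^[∑ x ∈ p.1, x.1] p

/-- The fully rectified labeled diagram `(rect T, rect L)`. -/
noncomputable def rectLab (p : Finset Cell × Labeling) : Finset Cell × Labeling := rectLabFrom 1 p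

open Classical in
/-- Greedy assignment of the given labels (in increasing order) to the available rows of
column `c`: each label goes to the lowest available row lying weakly above the cell with
that label in column `c+1` of the rectified right part `rp`, if such a cell exists; the
result is `none` when no such assignment is possible. -/
noncomputable def greedyAssign (c : ℕ) (rp : Finset Cell × Labeling) :
    List ℕ → Finset ℕ → Option (List (ℕ × ℕ))
  | [], _ => some []
  | lab :: labs, avail =>
    if h : (avail.filter fun row =>
        ∀ s ∈ colRows rp.1 (c + 1), rp.2 (c + 1, s) = lab → s ≤ row).Nonempty then
      (greedyAssign c rp labs (avail.erase ((avail.filter fun row =>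
          ∀ s ∈ colRows rp.1 (c + 1), rp.2 (c + 1, s) = lab → s ≤ row).min' h))).map
        (fun l => (lab, (avail.filter fun row =>
          ∀ s ∈ colRows rp.1 (c + 1), rp.2 (c + 1, s) = lab → s ≤ row).min' h) :: l)
    else none

open Classical in
/-- Label the rightmost `k` columns `m, m-1, …, m-k+1` of `T` with respect to `D`:
having labeled the columns strictly right of column `c`, rectify that part of `T`
together with its labels (with column `c+1` as the leftmost available column) and then
greedily assign the labels `{r : (c,r) ∈ D}` to the cells of column `c`. -/
noncomputable def labelColsAux (D T : Finset Cell) (m : ℕ) : ℕ → Option Labeling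
  | 0 => some fun _ => 0
  | k + 1 =>
    match labelColsAux D T m k with
    | none => none
    | some L =>
      match greedyAssign (m - k) (rectLabFrom (m - k + 1) (T.filter fun x => m - k < x.1, L))
          ((colRows D (m - k)).sort (· ≤ ·)) (colRows T (m - k)) with
      | none => none
      | some asg =>
        some fun x =>
          if x.1 = m - k then ((asg.find? fun p => p.2 == x.2).map Prod.fst).getD (L x)
          else L x

/-- The Kohnert labeling `L_D` of `T` with respect to `D`, or `none` when it is not
well defined. -/
noncomputable def kohnertLabel (D T : Finset Cell) : Option Labeling :=
  labelColsAux D T (T.sup Prod.fst) (T.sup Prod.fst)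

/-- `(T, L)` is a Kohnert tableau of content `a`: (i) for each `i ≥ 1` there is exactly
one cell labeled `i` in each of columns `1, …, a i` and in no other column; (ii) every
cell in row `r` has label at least `r`; (iii) cells with a common label occupy weakly
descending rows from left to right; (iv) if labels `i < j` occur in one column with `i`
above `j`, there is a cell labeled `i` in the next column strictly above the cell
labeled `j`. -/
def IsKohnertTableau (T : Finset Cell) (L : Labeling) (a : ℕ → ℕ) : Prop :=
  (∀ x ∈ T, 1 ≤ L x) ∧
  (∀ i c, 1 ≤ i → 1 ≤ c → ((∃ x ∈ T, x.1 = c ∧ L x = i) ↔ c ≤ a i)) ∧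
  (∀ x ∈ T, ∀ y ∈ T, x.1 = y.1 → L x = L y → x = y) ∧
  (∀ x ∈ T, x.2 ≤ L x) ∧
  (∀ x ∈ T, ∀ y ∈ T, L x = L y → x.1 < y.1 → y.2 ≤ x.2) ∧
  (∀ x ∈ T, ∀ y ∈ T, x.1 = y.1 → L x < L y → y.2 < x.2 →
    ∃ z ∈ T, z.1 = x.1 + 1 ∧ L z = L x ∧ y.2 < z.2)

/-- `Y ∈ KD D` is Yamanouchi with respect to `D`: the rectification of the Kohnert
labeling `L_D(Y)` is the super-standard labeling of a composition diagram, i.e.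
`rect Y` is a composition diagram and each of its cells in row `r` carries label `r`. -/
def Yamanouchi (D Y : Finset Cell) : Prop :=
  Y ∈ KD D ∧ ∃ L, kohnertLabel D Y = some L ∧
    IsCompositionDiagram (rectLab (Y, L)).1 ∧
    ∀ x ∈ (rectLab (Y, L)).1, (rectLab (Y, L)).2 x = x.2

/-! ### Demazure characters and Kohnert polynomials -/

open MvPolynomial Classical in
/-- The isobaric divided difference operator
`π_i f = ∂_i (x_i f) = (x_i f − s_i · (x_i f)) / (x_i − x_{i+1})`, defined as the unique
polynomial `g` with `g * (x_i − x_{i+1}) = x_i f − s_i · (x_i f)`. -/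
noncomputable def piOp (i : ℕ) (f : MvPolynomial ℕ ℤ) : MvPolynomial ℕ ℤ :=
  if h : ∃ g, g * (X i - X (i + 1)) =
      X i * f - rename (Equiv.swap i (i + 1)) (X i * f) then h.choose else 0

/-- `IsDemazure a f` holds exactly when `f` is the Demazure character `κ_a`:
`κ_λ = x^λ` for `λ` a partition, and `κ_{s_i · a} = π_i κ_a` whenever `a i > a (i+1)`.
Iterating the latter from the sorted partition `λ` of `a` along a chain of strict
descents realizes `κ_a = π_{ρ_ℓ} ⋯ π_{ρ_1} (x_1^{λ_1} ⋯ x_n^{λ_n})` for precisely the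
reduced words `(ρ_ℓ, …, ρ_1)` of the minimal-length permutation `w` with `w · λ = a`. -/
inductive IsDemazure : (ℕ →₀ ℕ) → MvPolynomial ℕ ℤ → Prop
  | base (l : ℕ →₀ ℕ) (h0 : l 0 = 0) (hl : ∀ i, 1 ≤ i → l (i + 1) ≤ l i) :
      IsDemazure l (MvPolynomial.monomial l 1)
  | step (a : ℕ →₀ ℕ) (f : MvPolynomial ℕ ℤ) (i : ℕ) (hi : 1 ≤ i) (hlt : a (i + 1) < a i)
      (h : IsDemazure a f) :
      IsDemazure (a.equivMapDomain (Equiv.swap i (i + 1))) (piOp i f)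

open Classical in
/-- `KD D` as a finite set (every Kohnert diagram of `D` lies in the box below `D`). -/
noncomputable def KDfin (D : Finset Cell) : Finset (Finset Cell) :=
  ((D.biUnion fun x => {x.1} ×ˢ Finset.Icc 1 x.2).powerset).filter (· ∈ KD D)

/-- The Kohnert polynomial `K_D = Σ_{T ∈ KD(D)} x^{wt T}`. -/
noncomputable def kohnertPoly (D : Finset Cell) : MvPolynomial ℕ ℤ :=
  ∑ T ∈ KDfin D, MvPolynomial.monomial (wt T) 1

open Classical in
/-- The set of Yamanouchi diagrams for `D`, as a finite set. -/
noncomputable def YamFin (D : Finset Cell) : Finset (Finset Cell) :=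
  (KDfin D).filter (Yamanouchi D)

/-- The set of column indices of the cells of row `r` of `D`. -/
def rowSet (D : Finset Cell) (r : ℕ) : Finset ℕ := (D.filter fun x => x.2 = r).image Prod.fst

/-- A diagram is vexillary if its rows are totally ordered by inclusion. -/
def Vexillary (D : Finset Cell) : Prop :=
  ∀ r s, rowSet D r ⊆ rowSet D s ∨ rowSet D s ⊆ rowSet D r

/-- The diagram `s_c · D` obtained by exchanging the contents of columns `c` and `c+1`. -/
def swapCols (c : ℕ) (D : Finset Cell) : Finset Cell :=
  D.image fun x => if x.1 = c then (c + 1, x.2) else if x.1 = c + 1 then (c, x.2) else x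


/-! ### Auxiliary machinery for the proof of `southwest_rectifyStar` -/

section Proofs

open Finset

lemma mem_freeLeftRows {T : Finset Cell} {c s : ℕ} :
    s ∈ freeLeftRows T c ↔ (c, s) ∈ T ∧ (c + 1, s) ∉ T := by
  unfold freeLeftRows
  simp only [Finset.mem_image, Finset.mem_filter]
  constructor
  · rintro ⟨⟨x1, x2⟩, ⟨hxT, rfl, hx2⟩, rfl⟩
    exact ⟨hxT, hx2⟩
  · rintro ⟨h1, h2⟩
    exact ⟨(c, s), ⟨h1, rfl, h2⟩, rfl⟩

lemma mem_freeRightRows {T : Finset Cell} {c s : ℕ} :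
    s ∈ freeRightRows T c ↔ (c + 1, s) ∈ T ∧ (c, s) ∉ T := by
  unfold freeRightRows
  simp only [Finset.mem_image, Finset.mem_filter]
  constructor
  · rintro ⟨⟨x1, x2⟩, ⟨hxT, rfl, hx2⟩, rfl⟩
    exact ⟨hxT, hx2⟩
  · rintro ⟨h1, h2⟩
    exact ⟨(c + 1, s), ⟨h1, rfl, h2⟩, rfl⟩

lemma rectify_eq_insert {T : Finset Cell} {c : ℕ} (hex : ∃ r, ColUnpaired T c r) :
    rectify c T = insert (c, sInf {r | ColUnpaired T c r})
      (T.erase (c + 1, sInf {r | ColUnpaired T c r})) := by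
  rw [rectify, if_pos hex]

lemma rectify_eq_self {T : Finset Cell} {c : ℕ} (hex : ¬ ∃ r, ColUnpaired T c r) :
    rectify c T = T := by
  rw [rectify, if_neg hex]

/-- The number of cells of row `ρ` in columns `≤ γ`. -/
def Nrow (T : Finset Cell) (ρ γ : ℕ) : ℕ :=
  (T.filter fun x => x.2 = ρ ∧ x.1 ≤ γ).card

lemma Nrow_succ_mem {T : Finset Cell} {ρ γ : ℕ} (h : (γ + 1, ρ) ∈ T) :
    Nrow T ρ (γ + 1) = Nrow T ρ γ + 1 := by
  unfold Nrow
  have hset : T.filter (fun x => x.2 = ρ ∧ x.1 ≤ γ + 1)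
      = insert (γ + 1, ρ) (T.filter fun x => x.2 = ρ ∧ x.1 ≤ γ) := by
    ext ⟨x1, x2⟩
    simp only [Finset.mem_filter, Finset.mem_insert, Prod.mk.injEq]
    constructor
    · rintro ⟨hx, rfl, hle⟩
      rcases Nat.lt_or_ge x1 (γ + 1) with hlt | hge
      · exact Or.inr ⟨hx, rfl, by omega⟩
      · exact Or.inl ⟨by omega, rfl⟩
    · rintro (⟨rfl, rfl⟩ | ⟨hx, rfl, hle⟩)
      · exact ⟨h, rfl, le_refl _⟩
      · exact ⟨hx, rfl, by omega⟩
  rw [hset, Finset.card_insert_of_notMem]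
  simp only [Finset.mem_filter]
  rintro ⟨-, -, hle⟩
  omega

lemma Nrow_succ_not_mem {T : Finset Cell} {ρ γ : ℕ} (h : (γ + 1, ρ) ∉ T) :
    Nrow T ρ (γ + 1) = Nrow T ρ γ := by
  unfold Nrow
  congr 1
  ext ⟨x1, x2⟩
  simp only [Finset.mem_filter]
  constructor
  · rintro ⟨hx, rfl, hle⟩
    refine ⟨hx, rfl, ?_⟩
    rcases Nat.lt_or_ge x1 (γ + 1) with hlt | hge
    · omega
    · exfalso; have : x1 = γ + 1 := by omega
      subst this; exact h hx
  · rintro ⟨hx, rfl, hle⟩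
    exact ⟨hx, rfl, by omega⟩

/-- The row-counting invariant preserved by rectification. -/
def Invc (T : Finset Cell) : Prop :=
  ∀ r s γ δ : ℕ, r < s → (δ, r) ∈ T → γ < δ → Nrow T s γ ≤ Nrow T r γ

lemma southwest_invc {T : Finset Cell} (hsw : Southwest T) : Invc T := by
  intro r s γ δ hrs hδr hγδ
  unfold Nrow
  apply Finset.card_le_card_of_injOn (fun x => (x.1, r))
  · rintro ⟨x1, x2⟩ hx
    simp only [Finset.mem_coe, Finset.mem_filter] at hx
    obtain ⟨hxT, hx2, hx1⟩ := hx
    subst hx2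
    exact Finset.mem_filter.mpr ⟨hsw x1 δ r x2 hxT hδr hrs (by omega), rfl, hx1⟩
  · rintro ⟨x1, x2⟩ hx ⟨y1, y2⟩ hy hxy
    simp only [Finset.mem_coe, Finset.mem_filter] at hx hy
    have h1 : x1 = y1 := congrArg Prod.fst hxy
    subst h1
    rw [Prod.mk.injEq]
    exact ⟨rfl, hx.2.1.trans hy.2.1.symm⟩

lemma Nrow_move_of_ne {T : Finset Cell} {c r₀ ρ γ : ℕ} (hρ : ρ ≠ r₀) :
    Nrow (insert (c, r₀) (T.erase (c + 1, r₀))) ρ γ = Nrow T ρ γ := by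
  unfold Nrow
  congr 1
  ext ⟨x1, x2⟩
  simp only [Finset.mem_filter, Finset.mem_insert, Finset.mem_erase, Prod.mk.injEq, ne_eq]
  constructor
  · rintro ⟨(⟨h4, h5⟩ | ⟨-, hxT⟩), h2, h3⟩
    · exact absurd (h2.symm.trans h5) hρ
    · exact ⟨hxT, h2, h3⟩
  · rintro ⟨hxT, h2, h3⟩
    refine ⟨Or.inr ⟨?_, hxT⟩, h2, h3⟩
    rintro ⟨-, h5⟩
    exact hρ (h2.symm.trans h5)

lemma Nrow_move_lt {T : Finset Cell} {c r₀ ρ γ : ℕ} (hγ : γ < c) :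
    Nrow (insert (c, r₀) (T.erase (c + 1, r₀))) ρ γ = Nrow T ρ γ := by
  unfold Nrow
  congr 1
  ext ⟨x1, x2⟩
  simp only [Finset.mem_filter, Finset.mem_insert, Finset.mem_erase, Prod.mk.injEq, ne_eq]
  constructor
  · rintro ⟨(⟨h4, h5⟩ | ⟨-, hxT⟩), h2, h3⟩
    · exact absurd h3 (by omega)
    · exact ⟨hxT, h2, h3⟩
  · rintro ⟨hxT, h2, h3⟩
    refine ⟨Or.inr ⟨?_, hxT⟩, h2, h3⟩
    rintro ⟨h4, -⟩
    omega

lemma Nrow_move_eq {T : Finset Cell} {c r₀ : ℕ} (hmem : (c + 1, r₀) ∈ T)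
    (hnot : (c, r₀) ∉ T) :
    Nrow (insert (c, r₀) (T.erase (c + 1, r₀))) r₀ c = Nrow T r₀ c + 1 := by
  unfold Nrow
  have hset : (insert (c, r₀) (T.erase (c + 1, r₀))).filter (fun x => x.2 = r₀ ∧ x.1 ≤ c)
      = insert (c, r₀) (T.filter fun x => x.2 = r₀ ∧ x.1 ≤ c) := by
    ext ⟨x1, x2⟩
    simp only [Finset.mem_filter, Finset.mem_insert, Finset.mem_erase, Prod.mk.injEq, ne_eq]
    constructor
    · rintro ⟨(⟨h4, h5⟩ | ⟨-, hxT⟩), h2, h3⟩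
      · exact Or.inl ⟨h4, h5⟩
      · exact Or.inr ⟨hxT, h2, h3⟩
    · rintro (⟨h4, h5⟩ | ⟨hxT, h2, h3⟩)
      · exact ⟨Or.inl ⟨h4, h5⟩, h5, by omega⟩
      · refine ⟨Or.inr ⟨?_, hxT⟩, h2, h3⟩
        rintro ⟨h4, -⟩
        omega
  rw [hset, Finset.card_insert_of_notMem]
  simp only [Finset.mem_filter]
  rintro ⟨hT, -, -⟩
  exact hnot hT

lemma Nrow_move_gt {T : Finset Cell} {c r₀ γ : ℕ} (hmem : (c + 1, r₀) ∈ T)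
    (hnot : (c, r₀) ∉ T) (hγ : c + 1 ≤ γ) :
    Nrow (insert (c, r₀) (T.erase (c + 1, r₀))) r₀ γ = Nrow T r₀ γ := by
  unfold Nrow
  have hset : (insert (c, r₀) (T.erase (c + 1, r₀))).filter (fun x => x.2 = r₀ ∧ x.1 ≤ γ)
      = insert (c, r₀) ((T.filter fun x => x.2 = r₀ ∧ x.1 ≤ γ).erase (c + 1, r₀)) := by
    ext ⟨x1, x2⟩
    simp only [Finset.mem_filter, Finset.mem_insert, Finset.mem_erase, Prod.mk.injEq, ne_eq]
    constructor
    · rintro ⟨(⟨h4, h5⟩ | ⟨hne, hxT⟩), h2, h3⟩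
      · exact Or.inl ⟨h4, h5⟩
      · exact Or.inr ⟨hne, hxT, h2, h3⟩
    · rintro (⟨h4, h5⟩ | ⟨hne, hxT, h2, h3⟩)
      · exact ⟨Or.inl ⟨h4, h5⟩, h5, by omega⟩
      · exact ⟨Or.inr ⟨hne, hxT⟩, h2, h3⟩
  have hmemf : (c + 1, r₀) ∈ T.filter fun x => x.2 = r₀ ∧ x.1 ≤ γ :=
    Finset.mem_filter.mpr ⟨hmem, rfl, hγ⟩
  have hnotmem : (c, r₀) ∉ (T.filter fun x => x.2 = r₀ ∧ x.1 ≤ γ).erase (c + 1, r₀) := by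
    simp only [Finset.mem_erase, Finset.mem_filter, ne_eq]
    rintro ⟨-, hT, -, -⟩
    exact hnot hT
  rw [hset, Finset.card_insert_of_notMem hnotmem, Finset.card_erase_of_mem hmemf]
  have hpos : 0 < (T.filter fun x => x.2 = r₀ ∧ x.1 ≤ γ).card := Finset.card_pos.mpr ⟨_, hmemf⟩
  omega

lemma invc_rectify {T : Finset Cell} {c : ℕ} (hc : 1 ≤ c) (h : Invc T) :
    Invc (rectify c T) := by
  by_cases hex : ∃ r, ColUnpaired T c r
  case neg => rwa [rectify_eq_self hex]
  obtain ⟨d, rfl⟩ : ∃ d, c = d + 1 := ⟨c - 1, by omega⟩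
  rw [rectify_eq_insert hex]
  set r₀ := sInf {r | ColUnpaired T (d + 1) r} with hr₀def
  have hr₀ : ColUnpaired T (d + 1) r₀ := Nat.sInf_mem hex
  have hmin : ∀ ρ, ρ < r₀ → ¬ ColUnpaired T (d + 1) ρ := by
    intro ρ hlt hcu
    have h7 : r₀ ≤ ρ := Nat.sInf_le hcu
    omega
  obtain ⟨hmem, hnot, hcnt⟩ := hr₀
  have memT' : ∀ x : Cell, x ∈ insert (d + 1, r₀) (T.erase (d + 1 + 1, r₀)) ↔
      x = (d + 1, r₀) ∨ (x ∈ T ∧ x ≠ (d + 1 + 1, r₀)) := by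
    intro x
    simp only [Finset.mem_insert, Finset.mem_erase, ne_eq]
    tauto
  intro r s γ δ hrs hδr hγδ
  rcases eq_or_ne s r₀ with rfl | hs
  · -- the moved row is the upper row
    have hδrT : (δ, r) ∈ T := by
      rcases (memT' (δ, r)).mp hδr with h1 | ⟨h1, -⟩
      · exfalso
        have h2 := congrArg Prod.snd h1
        simp only at h2
        omega
      · exact h1
    rw [Nrow_move_of_ne (show r ≠ r₀ by omega)]
    rcases lt_trichotomy γ (d + 1) with hγc | hγc | hγc
    · rw [Nrow_move_lt hγc]
      exact h r r₀ γ δ hrs hδrT hγδ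
    · subst hγc
      rw [Nrow_move_eq hmem hnot]
      by_cases h1 : (d + 1, r) ∈ T
      · have e1 : Nrow T r (d + 1) = Nrow T r d + 1 := Nrow_succ_mem h1
        have e0 : Nrow T r₀ (d + 1) = Nrow T r₀ d := Nrow_succ_not_mem hnot
        have i1 : Nrow T r₀ d ≤ Nrow T r d := h r r₀ d δ hrs hδrT (by omega)
        omega
      · by_cases h2 : (d + 1 + 1, r) ∈ T
        · have hncu : ¬ ColUnpaired T (d + 1) r := hmin r hrs
          have hge : ((freeRightRows T (d + 1)).filter fun σ => r ≤ σ).card ≤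
              ((freeLeftRows T (d + 1)).filter fun σ => r < σ).card := by
            by_contra hcon
            exact hncu ⟨h2, h1, by omega⟩
          have hsub : ((freeRightRows T (d + 1)).filter fun σ => r₀ ≤ σ) ⊆
              ((freeRightRows T (d + 1)).filter fun σ => r ≤ σ) := by
            intro σ hσ
            simp only [Finset.mem_filter] at hσ ⊢
            exact ⟨hσ.1, by omega⟩
          have hchain : ((freeLeftRows T (d + 1)).filter fun σ => r₀ < σ).card <
              ((freeLeftRows T (d + 1)).filter fun σ => r < σ).card :=
            lt_of_lt_of_le hcnt (le_trans (Finset.card_le_card hsub) hge)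
          have hnsub : ¬ ((freeLeftRows T (d + 1)).filter fun σ => r < σ) ⊆
              ((freeLeftRows T (d + 1)).filter fun σ => r₀ < σ) := by
            intro hss
            exact absurd (Finset.card_le_card hss) (by omega)
          obtain ⟨ρ, hρmem, hρnot⟩ := Finset.not_subset.mp hnsub
          have hρfl := Finset.mem_filter.mp hρmem
          obtain ⟨hρL1, hρL2⟩ := mem_freeLeftRows.mp hρfl.1
          have hρr : r < ρ := hρfl.2
          have hρr₀ : ρ < r₀ := by
            have h5 : ¬ r₀ < ρ := fun hh => hρnot (Finset.mem_filter.mpr ⟨hρfl.1, hh⟩)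
            have h6 : ρ ≠ r₀ := fun he => hnot (he ▸ hρL1)
            omega
          have e1 : Nrow T ρ (d + 1) = Nrow T ρ d + 1 := Nrow_succ_mem hρL1
          have e0 : Nrow T r₀ (d + 1) = Nrow T r₀ d := Nrow_succ_not_mem hnot
          have i1 : Nrow T r₀ d ≤ Nrow T ρ d := h ρ r₀ d (d + 1) hρr₀ hρL1 (by omega)
          have i2 : Nrow T ρ (d + 1) ≤ Nrow T r (d + 1) := h r ρ (d + 1) δ hρr hδrT (by omega)
          omega
        · have hδ2 : d + 1 + 1 < δ := by
            rcases eq_or_ne δ (d + 1 + 1) with rfl | hne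
            · exact absurd hδrT h2
            · omega
          have e0 : Nrow T r₀ (d + 1 + 1) = Nrow T r₀ (d + 1) + 1 := Nrow_succ_mem hmem
          have e1 : Nrow T r (d + 1 + 1) = Nrow T r (d + 1) := Nrow_succ_not_mem h2
          have i1 : Nrow T r₀ (d + 1 + 1) ≤ Nrow T r (d + 1 + 1) :=
            h r r₀ (d + 1 + 1) δ hrs hδrT hδ2
          omega
    · rw [Nrow_move_gt hmem hnot (by omega)]
      exact h r r₀ γ δ hrs hδrT hγδ
  · rcases eq_or_ne r r₀ with rfl | hr
    · -- the moved row is the lower row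
      rw [Nrow_move_of_ne hs]
      have hmono : Nrow T r₀ γ ≤ Nrow (insert (d + 1, r₀) (T.erase (d + 1 + 1, r₀))) r₀ γ := by
        rcases lt_trichotomy γ (d + 1) with h5 | h5 | h5
        · rw [Nrow_move_lt h5]
        · subst h5
          rw [Nrow_move_eq hmem hnot]
          omega
        · rw [Nrow_move_gt hmem hnot (by omega)]
      refine le_trans ?_ hmono
      rcases (memT' (δ, r₀)).mp hδr with h1 | ⟨h1, -⟩
      · have hδc : δ = d + 1 := congrArg Prod.fst h1
        exact h r₀ s γ (d + 1 + 1) hrs hmem (by omega)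
      · exact h r₀ s γ δ hrs h1 hγδ
    · rw [Nrow_move_of_ne hs, Nrow_move_of_ne hr]
      have hδrT : (δ, r) ∈ T := by
        rcases (memT' (δ, r)).mp hδr with h1 | ⟨h1, -⟩
        · exfalso
          have h2 := congrArg Prod.snd h1
          simp only at h2
          exact hr h2
        · exact h1
      exact h r s γ δ hrs hδrT hγδ

lemma kid (T : Finset Cell) (c ρ : ℕ) :
    (T.filter fun x => x.1 = c + 1 ∧ ρ ≤ x.2).card
      + ((freeLeftRows T c).filter fun σ => ρ ≤ σ).card
    = (T.filter fun x => x.1 = c ∧ ρ ≤ x.2).card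
      + ((freeRightRows T c).filter fun σ => ρ ≤ σ).card := by
  classical
  have id1 : (T.filter fun x => (x.1 = c + 1 ∧ ρ ≤ x.2) ∧ (c, x.2) ∈ T).card
      + (T.filter fun x => (x.1 = c + 1 ∧ ρ ≤ x.2) ∧ ¬ (c, x.2) ∈ T).card
      = (T.filter fun x => x.1 = c + 1 ∧ ρ ≤ x.2).card := by
    have e1 : (T.filter fun x => (x.1 = c + 1 ∧ ρ ≤ x.2) ∧ (c, x.2) ∈ T)
        = (T.filter fun x => x.1 = c + 1 ∧ ρ ≤ x.2).filter fun x => (c, x.2) ∈ T := by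
      rw [Finset.filter_filter]
    have e2 : (T.filter fun x => (x.1 = c + 1 ∧ ρ ≤ x.2) ∧ ¬ (c, x.2) ∈ T)
        = (T.filter fun x => x.1 = c + 1 ∧ ρ ≤ x.2).filter fun x => ¬ (c, x.2) ∈ T := by
      rw [Finset.filter_filter]
    rw [e1, e2]
    exact Finset.card_filter_add_card_filter_not _
  have id2 : (T.filter fun x => (x.1 = c ∧ ρ ≤ x.2) ∧ (c + 1, x.2) ∈ T).card
      + (T.filter fun x => (x.1 = c ∧ ρ ≤ x.2) ∧ ¬ (c + 1, x.2) ∈ T).card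
      = (T.filter fun x => x.1 = c ∧ ρ ≤ x.2).card := by
    have e1 : (T.filter fun x => (x.1 = c ∧ ρ ≤ x.2) ∧ (c + 1, x.2) ∈ T)
        = (T.filter fun x => x.1 = c ∧ ρ ≤ x.2).filter fun x => (c + 1, x.2) ∈ T := by
      rw [Finset.filter_filter]
    have e2 : (T.filter fun x => (x.1 = c ∧ ρ ≤ x.2) ∧ ¬ (c + 1, x.2) ∈ T)
        = (T.filter fun x => x.1 = c ∧ ρ ≤ x.2).filter fun x => ¬ (c + 1, x.2) ∈ T := by
      rw [Finset.filter_filter]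
    rw [e1, e2]
    exact Finset.card_filter_add_card_filter_not _
  have id3 : (T.filter fun x => (x.1 = c + 1 ∧ ρ ≤ x.2) ∧ (c, x.2) ∈ T).card
      = (T.filter fun x => (x.1 = c ∧ ρ ≤ x.2) ∧ (c + 1, x.2) ∈ T).card := by
    apply Finset.card_bij (fun x _ => (c, x.2))
    · rintro ⟨x1, x2⟩ hx
      simp only [Finset.mem_filter] at hx
      obtain ⟨hxT, ⟨hx1, hx2⟩, hcx⟩ := hx
      subst hx1
      exact Finset.mem_filter.mpr ⟨hcx, ⟨rfl, hx2⟩, hxT⟩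
    · rintro ⟨x1, x2⟩ hx ⟨y1, y2⟩ hy hxy
      simp only [Finset.mem_filter] at hx hy
      have h2 : x2 = y2 := congrArg Prod.snd hxy
      rw [Prod.mk.injEq]
      exact ⟨hx.2.1.1.trans hy.2.1.1.symm, h2⟩
    · rintro ⟨y1, y2⟩ hy
      simp only [Finset.mem_filter] at hy
      obtain ⟨hyT, ⟨hy1, hy2⟩, hcy⟩ := hy
      rw [hy1] at hyT
      refine ⟨(c + 1, y2), Finset.mem_filter.mpr ⟨hcy, ⟨rfl, hy2⟩, hyT⟩, ?_⟩
      rw [Prod.mk.injEq]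
      exact ⟨hy1.symm, rfl⟩
  have id4 : ((freeLeftRows T c).filter fun σ => ρ ≤ σ).card
      = (T.filter fun x => (x.1 = c ∧ ρ ≤ x.2) ∧ ¬ (c + 1, x.2) ∈ T).card := by
    apply Finset.card_bij (fun σ _ => (c, σ))
    · intro σ hσ
      have hσf := Finset.mem_filter.mp hσ
      obtain ⟨h1, h2⟩ := mem_freeLeftRows.mp hσf.1
      exact Finset.mem_filter.mpr ⟨h1, ⟨rfl, hσf.2⟩, h2⟩
    · intro σ _ τ _ hστ
      exact congrArg Prod.snd hστ
    · rintro ⟨y1, y2⟩ hy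
      simp only [Finset.mem_filter] at hy
      obtain ⟨hyT, ⟨hy1, hy2⟩, hcy⟩ := hy
      rw [hy1] at hyT
      refine ⟨y2, Finset.mem_filter.mpr ⟨mem_freeLeftRows.mpr ⟨hyT, hcy⟩, hy2⟩, ?_⟩
      rw [Prod.mk.injEq]
      exact ⟨hy1.symm, rfl⟩
  have id5 : ((freeRightRows T c).filter fun σ => ρ ≤ σ).card
      = (T.filter fun x => (x.1 = c + 1 ∧ ρ ≤ x.2) ∧ ¬ (c, x.2) ∈ T).card := by
    apply Finset.card_bij (fun σ _ => (c + 1, σ))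
    · intro σ hσ
      have hσf := Finset.mem_filter.mp hσ
      obtain ⟨h1, h2⟩ := mem_freeRightRows.mp hσf.1
      exact Finset.mem_filter.mpr ⟨h1, ⟨rfl, hσf.2⟩, h2⟩
    · intro σ _ τ _ hστ
      exact congrArg Prod.snd hστ
    · rintro ⟨y1, y2⟩ hy
      simp only [Finset.mem_filter] at hy
      obtain ⟨hyT, ⟨hy1, hy2⟩, hcy⟩ := hy
      rw [hy1] at hyT
      refine ⟨y2, Finset.mem_filter.mpr ⟨mem_freeRightRows.mpr ⟨hyT, hcy⟩, hy2⟩, ?_⟩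
      rw [Prod.mk.injEq]
      exact ⟨hy1.symm, rfl⟩
  omega

lemma count_lt_of_unpaired {T : Finset Cell} {c r : ℕ} (hcu : ColUnpaired T c r) :
    (T.filter fun x => x.1 = c ∧ r ≤ x.2).card
      < (T.filter fun x => x.1 = c + 1 ∧ r ≤ x.2).card := by
  obtain ⟨h1, h2, h3⟩ := hcu
  have hfl : (freeLeftRows T c).filter (fun σ => r ≤ σ)
      = (freeLeftRows T c).filter (fun σ => r < σ) := by
    ext σ
    simp only [Finset.mem_filter]
    constructor
    · rintro ⟨hσ, hle⟩
      refine ⟨hσ, lt_of_le_of_ne hle ?_⟩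
      intro he
      exact h2 (he ▸ (mem_freeLeftRows.mp hσ).1)
    · rintro ⟨hσ, hlt⟩
      exact ⟨hσ, by omega⟩
  have hk := kid T c r
  rw [hfl] at hk
  omega

lemma not_unpaired_of_rectified {T : Finset Cell} (hD : IsDiagram T) (h : Rectified T)
    {c r : ℕ} (hc : 1 ≤ c) : ¬ ColUnpaired T c r := by
  intro hcu
  have hr : 1 ≤ r := (hD _ hcu.1).2
  have h5 := h c r hc hr
  have h6 := count_lt_of_unpaired hcu
  omega

lemma exists_unpaired_of_not_rectified {T : Finset Cell} (h : ¬ Rectified T) :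
    ∃ c r, 1 ≤ c ∧ ColUnpaired T c r := by
  unfold Rectified at h
  push_neg at h
  obtain ⟨c, r, hc, hr, hlt⟩ := h
  have hk := kid T c r
  have hne : ((freeRightRows T c).filter fun σ => r ≤ σ).Nonempty := by
    rw [← Finset.card_pos]
    omega
  set ρ := ((freeRightRows T c).filter fun σ => r ≤ σ).min' hne with hρdef
  have hρmem : ρ ∈ (freeRightRows T c).filter fun σ => r ≤ σ := Finset.min'_mem _ hne
  have hρf := Finset.mem_filter.mp hρmem
  obtain ⟨hρ1, hρ2⟩ := mem_freeRightRows.mp hρf.1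
  refine ⟨c, ρ, hc, hρ1, hρ2, ?_⟩
  have heq : ((freeRightRows T c).filter fun σ => ρ ≤ σ)
      = ((freeRightRows T c).filter fun σ => r ≤ σ) := by
    ext σ
    simp only [Finset.mem_filter]
    constructor
    · rintro ⟨h5, h6⟩
      have := hρf.2
      exact ⟨h5, by omega⟩
    · rintro ⟨h5, h6⟩
      exact ⟨h5, Finset.min'_le _ _ (Finset.mem_filter.mpr ⟨h5, h6⟩)⟩
  have hsub : ((freeLeftRows T c).filter fun σ => ρ < σ) ⊆
      ((freeLeftRows T c).filter fun σ => r ≤ σ) := by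
    intro σ hσ
    simp only [Finset.mem_filter] at hσ ⊢
    have := hρf.2
    exact ⟨hσ.1, by omega⟩
  rw [heq]
  have h7 := Finset.card_le_card hsub
  omega

lemma isDiagram_rectify {T : Finset Cell} {c : ℕ} (hc : 1 ≤ c) (hD : IsDiagram T) :
    IsDiagram (rectify c T) := by
  by_cases hex : ∃ r, ColUnpaired T c r
  · rw [rectify_eq_insert hex]
    have hr₀ : ColUnpaired T c (sInf {r | ColUnpaired T c r}) := Nat.sInf_mem hex
    intro x hx
    rcases Finset.mem_insert.mp hx with rfl | hx'
    · exact ⟨hc, (hD _ hr₀.1).2⟩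
    · exact hD _ (Finset.mem_of_mem_erase hx')
  · rwa [rectify_eq_self hex]

lemma rect_step_of_not_rectified {T : Finset Cell} (hD : IsDiagram T) (hR : ¬ Rectified T) :
    ∃ S, RectStep T S ∧ IsDiagram S ∧ (∑ x ∈ S, x.1) + 1 = ∑ x ∈ T, x.1 := by
  obtain ⟨c, r, hc, hcu⟩ := exists_unpaired_of_not_rectified hR
  have hex : ∃ r, ColUnpaired T c r := ⟨r, hcu⟩
  refine ⟨rectify c T, ⟨c, hc, rfl⟩, isDiagram_rectify hc hD, ?_⟩
  rw [rectify_eq_insert hex]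
  have hr₀ : ColUnpaired T c (sInf {r | ColUnpaired T c r}) := Nat.sInf_mem hex
  have h2 : (c, sInf {r | ColUnpaired T c r}) ∉ T.erase (c + 1, sInf {r | ColUnpaired T c r}) :=
    fun hmem => hr₀.2.1 (Finset.mem_of_mem_erase hmem)
  rw [Finset.sum_insert h2]
  have h3 : (∑ x ∈ T.erase (c + 1, sInf {r | ColUnpaired T c r}), x.1) + (c + 1)
      = ∑ x ∈ T, x.1 := Finset.sum_erase_add T (fun x => x.1) hr₀.1
  show c + (∑ x ∈ T.erase (c + 1, sInf {r | ColUnpaired T c r}), x.1) + 1 = ∑ x ∈ T, x.1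
  omega

lemma exists_rectified {T : Finset Cell} (hD : IsDiagram T) :
    ∃ S, Relation.ReflTransGen RectStep T S ∧ Rectified S := by
  have main : ∀ n (T : Finset Cell), IsDiagram T → (∑ x ∈ T, x.1) ≤ n →
      ∃ S, Relation.ReflTransGen RectStep T S ∧ Rectified S := by
    intro n
    induction n with
    | zero =>
      intro T hD hsum
      by_cases hR : Rectified T
      · exact ⟨T, Relation.ReflTransGen.refl, hR⟩
      · obtain ⟨S, -, -, hs⟩ := rect_step_of_not_rectified hD hR
        exfalso
        omega
    | succ n ih =>
      intro T hD hsum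
      by_cases hR : Rectified T
      · exact ⟨T, Relation.ReflTransGen.refl, hR⟩
      · obtain ⟨S, hstep, hSD, hs⟩ := rect_step_of_not_rectified hD hR
        obtain ⟨S', hpath, hrect⟩ := ih S hSD (by omega)
        exact ⟨S', Relation.ReflTransGen.head hstep hpath, hrect⟩
  exact main _ T hD le_rfl

lemma Nrow_lt_of_not_mem {T : Finset Cell} (hD : IsDiagram T) {c r : ℕ} (hc : 1 ≤ c)
    (h0 : (c, r) ∉ T) : Nrow T r c < c := by
  have hle : Nrow T r c ≤ ((Finset.Icc 1 c).erase c).card := by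
    apply Finset.card_le_card_of_injOn (fun x => x.1)
    · rintro ⟨x1, x2⟩ hx
      simp only [Finset.mem_coe, Finset.mem_filter] at hx
      obtain ⟨hxT, hx2, hx1⟩ := hx
      subst hx2
      refine Finset.mem_coe.mpr (Finset.mem_erase.mpr
        ⟨?_, Finset.mem_Icc.mpr ⟨(hD _ hxT).1, hx1⟩⟩)
      intro heq
      exact h0 (heq ▸ hxT)
    · rintro ⟨x1, x2⟩ hx ⟨y1, y2⟩ hy hxy
      simp only [Finset.mem_coe, Finset.mem_filter] at hx hy
      have h1 : x1 = y1 := hxy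
      rw [Prod.mk.injEq]
      exact ⟨h1, hx.2.1.trans hy.2.1.symm⟩
  have hic : ((Finset.Icc 1 c).erase c).card = c - 1 := by
    rw [Finset.card_erase_of_mem (Finset.mem_Icc.mpr ⟨hc, le_rfl⟩), Nat.card_Icc]
    omega
  omega

lemma Nrow_ge_of_prefix {T : Finset Cell} {s c : ℕ}
    (hall : ∀ j, 1 ≤ j → j ≤ c → (j, s) ∈ T) : c ≤ Nrow T s c := by
  have hle : (Finset.Icc 1 c).card ≤ Nrow T s c := by
    apply Finset.card_le_card_of_injOn (fun j => (j, s))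
    · intro j hj
      simp only [Finset.mem_coe, Finset.mem_Icc] at hj
      exact Finset.mem_coe.mpr (Finset.mem_filter.mpr ⟨hall j hj.1 hj.2, rfl, hj.2⟩)
    · intro j _ k _ hjk
      exact congrArg Prod.fst hjk
  rwa [Nat.card_Icc, Nat.add_sub_cancel] at hle

lemma left_justified_of_rectified {T : Finset Cell} (hD : IsDiagram T) (hinv : Invc T)
    (hrect : Rectified T) : ∀ c r, 1 ≤ c → (c + 1, r) ∈ T → (c, r) ∈ T := by
  intro c
  induction c using Nat.strong_induction_on with
  | _ c ih =>
    intro r hc h1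
    by_contra h0
    have hncu : ¬ ColUnpaired T c r := not_unpaired_of_rectified hD hrect hc
    have hcnt : ((freeRightRows T c).filter fun σ => r ≤ σ).card ≤
        ((freeLeftRows T c).filter fun σ => r < σ).card := by
      by_contra hcon
      exact hncu ⟨h1, h0, by omega⟩
    have hrmem : r ∈ (freeRightRows T c).filter fun σ => r ≤ σ :=
      Finset.mem_filter.mpr ⟨mem_freeRightRows.mpr ⟨h1, h0⟩, le_rfl⟩
    have hpos : 0 < ((freeLeftRows T c).filter fun σ => r < σ).card := by
      have h5 := Finset.card_pos.mpr ⟨r, hrmem⟩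
      omega
    obtain ⟨s, hsmem⟩ := Finset.card_pos.mp hpos
    have hsf := Finset.mem_filter.mp hsmem
    obtain ⟨hs1, hs2⟩ := mem_freeLeftRows.mp hsf.1
    have hrs : r < s := hsf.2
    have hN : Nrow T s c ≤ Nrow T r c := hinv r s c (c + 1) hrs h1 (by omega)
    have hb : Nrow T r c < c := Nrow_lt_of_not_mem hD hc h0
    have hgap : ∃ c', 2 ≤ c' ∧ c' ≤ c ∧ (c', s) ∈ T ∧ (c' - 1, s) ∉ T := by
      by_contra hng
      push_neg at hng
      have hall : ∀ k, k < c → (c - k, s) ∈ T := by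
        intro k
        induction k with
        | zero =>
          intro _
          simpa using hs1
        | succ k ihk =>
          intro hk
          have h5 := ihk (by omega)
          have h6 : 2 ≤ c - k := by omega
          have h7 := hng (c - k) h6 (by omega) h5
          have h8 : c - (k + 1) = c - k - 1 := by omega
          rw [h8]
          exact h7
      have hall2 : ∀ j, 1 ≤ j → j ≤ c → (j, s) ∈ T := by
        intro j h5 h6
        have h7 := hall (c - j) (by omega)
        have h8 : c - (c - j) = j := by omega
        rwa [h8] at h7
      have h9 := Nrow_ge_of_prefix hall2
      omega
    obtain ⟨c', h2c, hcc, hcs, hcs'⟩ := hgap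
    have h9 : c' - 1 + 1 = c' := by omega
    exact hcs' (ih (c' - 1) (by omega) s (by omega) (by rw [h9]; exact hcs))

lemma isCompositionDiagram_of_leftJustified {T : Finset Cell} (hD : IsDiagram T)
    (hlj : ∀ c r, 1 ≤ c → (c + 1, r) ∈ T → (c, r) ∈ T) : IsCompositionDiagram T := by
  refine ⟨fun r => (T.filter fun x => x.2 = r).sup fun x => x.1, ?_⟩
  intro c r
  constructor
  · intro h
    refine ⟨(hD _ h).1, (hD _ h).2, ?_⟩
    show c ≤ (T.filter fun x => x.2 = r).sup fun x => x.1
    have hmem2 : (c, r) ∈ T.filter fun x : Cell => x.2 = r := Finset.mem_filter.mpr ⟨h, rfl⟩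
    exact Finset.le_sup (f := fun x : Cell => x.1) hmem2
  · rintro ⟨hc1, hr1, hca⟩
    replace hca : c ≤ (T.filter fun x => x.2 = r).sup fun x => x.1 := hca
    have hne : (T.filter fun x => x.2 = r).Nonempty := by
      rw [Finset.nonempty_iff_ne_empty]
      intro hemp
      rw [hemp] at hca
      simp only [Finset.sup_empty] at hca
      have hb0 : (⊥ : ℕ) = 0 := rfl
      omega
    obtain ⟨⟨m1, m2⟩, hm, hsup⟩ := Finset.exists_mem_eq_sup _ hne fun x : Cell => x.1
    have hmf := Finset.mem_filter.mp hm
    have hm2 : m2 = r := hmf.2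
    subst hm2
    have hcm : c ≤ m1 := by
      rw [hsup] at hca
      exact hca
    have hdesc : ∀ d, 1 ≤ m1 - d → (m1 - d, m2) ∈ T := by
      intro d
      induction d with
      | zero =>
        intro _
        simpa using hmf.1
      | succ d ihd =>
        intro h5
        have h6 : 1 ≤ m1 - d := by omega
        have h7 := ihd h6
        have h8 : m1 - d = (m1 - (d + 1)) + 1 := by omega
        rw [h8] at h7
        exact hlj (m1 - (d + 1)) m2 h5 h7
    have h9 := hdesc (m1 - c) (by omega)
    have h10 : m1 - (m1 - c) = c := by omega
    rwa [h10] at h9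

lemma invc_diagram_of_path {T S : Finset Cell} (hpath : Relation.ReflTransGen RectStep T S)
    (hD : IsDiagram T) (hI : Invc T) : IsDiagram S ∧ Invc S := by
  induction hpath with
  | refl => exact ⟨hD, hI⟩
  | tail hab hbc ih =>
    obtain ⟨hD', hI'⟩ := ih
    obtain ⟨c, hc, rfl⟩ := hbc
    exact ⟨isDiagram_rectify hc hD', invc_rectify hc hI'⟩

/-- Mid-flight states of `R_c^*` applied to a southwest diagram `T₀`:
`M` is the (downward closed) set of rows already moved from column `c+1` to column `c`. -/
def Pstate (T₀ : Finset Cell) (c : ℕ) (M : Finset ℕ) (T : Finset Cell) : Prop :=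
  (∀ ρ, (c, ρ) ∈ T ↔ (c, ρ) ∈ T₀ ∨ ρ ∈ M) ∧
  (∀ ρ, (c + 1, ρ) ∈ T ↔ (c + 1, ρ) ∈ T₀ ∧ ρ ∉ M) ∧
  (∀ x : Cell, x.1 ≠ c → x.1 ≠ c + 1 → (x ∈ T ↔ x ∈ T₀)) ∧
  (∀ ρ ∈ M, (c + 1, ρ) ∈ T₀ ∧ (c, ρ) ∉ T₀) ∧
  (∀ m ∈ M, ∀ ρ, (c + 1, ρ) ∈ T₀ → (c, ρ) ∉ T₀ → ρ < m → ρ ∈ M)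

lemma sw_col_lt {T₀ : Finset Cell} (hsw : Southwest T₀) {c a b : ℕ}
    (ha : (c, a) ∈ T₀) (hb : (c + 1, b) ∈ T₀) (hnb : (c, b) ∉ T₀) : a < b := by
  rcases lt_trichotomy a b with h | h | h
  · exact h
  · exact absurd (h ▸ ha) hnb
  · exact absurd (hsw c (c + 1) b a ha hb h (by omega)) hnb

lemma pstate_unpaired_iff {T₀ T : Finset Cell} {c : ℕ} {M : Finset ℕ}
    (hsw : Southwest T₀) (hP : Pstate T₀ c M T) {ρ : ℕ} :
    ColUnpaired T c ρ ↔ ((c + 1, ρ) ∈ T₀ ∧ (c, ρ) ∉ T₀ ∧ ρ ∉ M) := by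
  have hc0 := hP.1
  have hc1 := hP.2.1
  have hdc := hP.2.2.2.2
  constructor
  · rintro ⟨h1, h2, -⟩
    have h3 := (hc1 ρ).mp h1
    have h4 : ¬ ((c, ρ) ∈ T₀ ∨ ρ ∈ M) := fun hh => h2 ((hc0 ρ).mpr hh)
    push_neg at h4
    exact ⟨h3.1, h4.1, h3.2⟩
  · rintro ⟨h1, h2, h3⟩
    have hin : (c + 1, ρ) ∈ T := (hc1 ρ).mpr ⟨h1, h3⟩
    have hnotin : (c, ρ) ∉ T := by
      intro hh
      rcases (hc0 ρ).mp hh with h4 | h4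
      · exact h2 h4
      · exact h3 h4
    refine ⟨hin, hnotin, ?_⟩
    have hempty : ((freeLeftRows T c).filter fun σ => ρ < σ) = ∅ := by
      rw [Finset.eq_empty_iff_forall_notMem]
      intro σ hσ
      have hσf := Finset.mem_filter.mp hσ
      obtain ⟨hσ1, hσ2⟩ := mem_freeLeftRows.mp hσf.1
      rcases (hc0 σ).mp hσ1 with h4 | h4
      · have := sw_col_lt hsw h4 h1 h2
        omega
      · exact h3 (hdc σ h4 ρ h1 h2 hσf.2)
    rw [hempty]
    have hρfr : ρ ∈ (freeRightRows T c).filter fun σ => ρ ≤ σ :=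
      Finset.mem_filter.mpr ⟨mem_freeRightRows.mpr ⟨hin, hnotin⟩, le_rfl⟩
    have hpos := Finset.card_pos.mpr ⟨ρ, hρfr⟩
    simpa using hpos

lemma pstate_iterate {T₀ : Finset Cell} (hsw : Southwest T₀) (c : ℕ) :
    ∀ k (M : Finset ℕ) (T : Finset Cell), Pstate T₀ c M T →
      ((freeRightRows T₀ c) \ M).card ≤ k →
      Pstate T₀ c (freeRightRows T₀ c) ((rectify c)^[k] T) := by
  intro k
  induction k with
  | zero =>
    intro M T hP hcard
    have hMF : M = freeRightRows T₀ c := by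
      apply Finset.Subset.antisymm
      · intro ρ hρ
        exact mem_freeRightRows.mpr (hP.2.2.2.1 ρ hρ)
      · intro ρ hρ
        by_contra hρM
        have h5 : ρ ∈ (freeRightRows T₀ c) \ M := Finset.mem_sdiff.mpr ⟨hρ, hρM⟩
        have h6 := Finset.card_pos.mpr ⟨ρ, h5⟩
        omega
    rw [Function.iterate_zero_apply]
    rwa [hMF] at hP
  | succ k ih =>
    intro M T hP hcard
    by_cases hne : ((freeRightRows T₀ c) \ M).Nonempty
    · obtain ⟨σ, hσ⟩ := hne
      have hσs := Finset.mem_sdiff.mp hσ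
      obtain ⟨hσ1, hσ2⟩ := mem_freeRightRows.mp hσs.1
      have hex : ∃ r, ColUnpaired T c r :=
        ⟨σ, (pstate_unpaired_iff hsw hP).mpr ⟨hσ1, hσ2, hσs.2⟩⟩
      have hr₀ : ColUnpaired T c (sInf {r | ColUnpaired T c r}) := Nat.sInf_mem hex
      set r₀ := sInf {r | ColUnpaired T c r} with hr₀def
      have hr₀c := (pstate_unpaired_iff hsw hP).mp hr₀
      obtain ⟨hr₁, hr₂, hr₃⟩ := hr₀c
      have hc0 := hP.1
      have hc1 := hP.2.1
      have hoth := hP.2.2.1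
      have hM := hP.2.2.2.1
      have hdc := hP.2.2.2.2
      have hcc1 : c ≠ c + 1 := by omega
      have hstep : Pstate T₀ c (insert r₀ M) (rectify c T) := by
        rw [rectify_eq_insert hex]
        refine ⟨?_, ?_, ?_, ?_, ?_⟩
        · intro ρ
          constructor
          · intro h5
            rcases Finset.mem_insert.mp h5 with h6 | h6
            · have h7 : ρ = r₀ := congrArg Prod.snd h6
              exact Or.inr (Finset.mem_insert.mpr (Or.inl h7))
            · have h7 := Finset.mem_of_mem_erase h6
              rcases (hc0 ρ).mp h7 with h8 | h8
              · exact Or.inl h8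
              · exact Or.inr (Finset.mem_insert.mpr (Or.inr h8))
          · intro h5
            have hback : (c, ρ) ∈ T₀ ∨ ρ ∈ M → (c, ρ) ∈
                insert (c, r₀) (T.erase (c + 1, r₀)) := by
              intro h6
              refine Finset.mem_insert.mpr (Or.inr (Finset.mem_erase.mpr
                ⟨?_, (hc0 ρ).mpr h6⟩))
              intro h7
              exact hcc1 (congrArg Prod.fst h7)
            rcases h5 with h6 | h6
            · exact hback (Or.inl h6)
            · rcases Finset.mem_insert.mp h6 with h7 | h7
              · subst h7
                exact Finset.mem_insert.mpr (Or.inl rfl)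
              · exact hback (Or.inr h7)
        · intro ρ
          constructor
          · intro h5
            rcases Finset.mem_insert.mp h5 with h6 | h6
            · exact absurd (congrArg Prod.fst h6) (by omega)
            · obtain ⟨hne', h7⟩ := Finset.mem_erase.mp h6
              have hρr : ρ ≠ r₀ := by
                intro he
                exact hne' (by rw [he])
              have h8 := (hc1 ρ).mp h7
              refine ⟨h8.1, fun hmem => ?_⟩
              rcases Finset.mem_insert.mp hmem with h9 | h9
              · exact hρr h9
              · exact h8.2 h9
          · rintro ⟨h5, h6⟩
            have hρr : ρ ≠ r₀ := fun he => h6 (Finset.mem_insert.mpr (Or.inl he))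
            have hρM : ρ ∉ M := fun he => h6 (Finset.mem_insert.mpr (Or.inr he))
            refine Finset.mem_insert.mpr (Or.inr (Finset.mem_erase.mpr
              ⟨?_, (hc1 ρ).mpr ⟨h5, hρM⟩⟩))
            intro h7
            exact hρr (congrArg Prod.snd h7)
        · intro x hx1 hx2
          have hxc : x ≠ (c, r₀) := fun he => hx1 (congrArg Prod.fst he)
          have hxc1 : x ≠ (c + 1, r₀) := fun he => hx2 (congrArg Prod.fst he)
          rw [Finset.mem_insert, Finset.mem_erase]
          constructor
          · rintro (h5 | ⟨-, h5⟩)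
            · exact absurd h5 hxc
            · exact (hoth x hx1 hx2).mp h5
          · intro h5
            exact Or.inr ⟨hxc1, (hoth x hx1 hx2).mpr h5⟩
        · intro ρ hρ
          rcases Finset.mem_insert.mp hρ with rfl | hρ'
          · exact ⟨hr₁, hr₂⟩
          · exact hM ρ hρ'
        · intro m hm ρ h5 h6 h7
          rcases Finset.mem_insert.mp hm with rfl | hm'
          · by_cases h8 : ρ ∈ M
            · exact Finset.mem_insert.mpr (Or.inr h8)
            · exfalso
              have h9 : ColUnpaired T c ρ := (pstate_unpaired_iff hsw hP).mpr ⟨h5, h6, h8⟩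
              have h10 : r₀ ≤ ρ := Nat.sInf_le h9
              omega
          · exact Finset.mem_insert.mpr (Or.inr (hdc m hm' ρ h5 h6 h7))
      have hr₀mem : r₀ ∈ freeRightRows T₀ c \ M :=
        Finset.mem_sdiff.mpr ⟨mem_freeRightRows.mpr ⟨hr₁, hr₂⟩, hr₃⟩
      have hsd : freeRightRows T₀ c \ insert r₀ M = (freeRightRows T₀ c \ M).erase r₀ := by
        ext τ
        simp only [Finset.mem_sdiff, Finset.mem_erase, Finset.mem_insert, ne_eq]
        tauto
      have hcard' : (freeRightRows T₀ c \ insert r₀ M).card ≤ k := by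
        rw [hsd, Finset.card_erase_of_mem hr₀mem]
        have := Finset.card_pos.mpr ⟨r₀, hr₀mem⟩
        omega
      rw [Function.iterate_succ_apply]
      exact ih (insert r₀ M) (rectify c T) hstep hcard'
    · have hMF : M = freeRightRows T₀ c := by
        apply Finset.Subset.antisymm
        · intro ρ hρ
          exact mem_freeRightRows.mpr (hP.2.2.2.1 ρ hρ)
        · intro ρ hρ
          by_contra hρM
          exact hne ⟨ρ, Finset.mem_sdiff.mpr ⟨hρ, hρM⟩⟩
      have hnone : ¬ ∃ r, ColUnpaired T c r := by
        rintro ⟨r, hr⟩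
        have h5 := (pstate_unpaired_iff hsw hP).mp hr
        exact hne ⟨r, Finset.mem_sdiff.mpr
          ⟨mem_freeRightRows.mpr ⟨h5.1, h5.2.1⟩, h5.2.2⟩⟩
      have hfix : rectify c T = T := rectify_eq_self hnone
      rw [Function.iterate_fixed hfix]
      rwa [hMF] at hP

lemma southwest_rectifyStar_single {T₀ : Finset Cell} (hsw : Southwest T₀) (c : ℕ) :
    Southwest (rectifyStar c T₀) := by
  have hinit : Pstate T₀ c ∅ T₀ := by
    refine ⟨fun ρ => by simp, fun ρ => by simp, fun x _ _ => Iff.rfl, ?_, ?_⟩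
    · intro ρ hρ
      simp at hρ
    · intro m hm
      simp at hm
  have hbound : (freeRightRows T₀ c \ ∅).card ≤ T₀.card := by
    rw [Finset.sdiff_empty]
    calc (freeRightRows T₀ c).card
        ≤ (T₀.filter fun x => x.1 = c + 1 ∧ (c, x.2) ∉ T₀).card := Finset.card_image_le
      _ ≤ T₀.card := Finset.card_filter_le _ _
  have hfin := pstate_iterate hsw c T₀.card ∅ T₀ hinit hbound
  show Southwest ((rectify c)^[T₀.card] T₀)
  have hc0 := hfin.1
  have hc1 := hfin.2.1
  have hoth := hfin.2.2.1
  have memc : ∀ ρ, (c, ρ) ∈ (rectify c)^[T₀.card] T₀ ↔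
      ((c, ρ) ∈ T₀ ∨ (c + 1, ρ) ∈ T₀) := by
    intro ρ
    rw [hc0 ρ]
    constructor
    · rintro (h | h)
      · exact Or.inl h
      · exact Or.inr (mem_freeRightRows.mp h).1
    · rintro (h | h)
      · exact Or.inl h
      · by_cases h2 : (c, ρ) ∈ T₀
        · exact Or.inl h2
        · exact Or.inr (mem_freeRightRows.mpr ⟨h, h2⟩)
  have memc1 : ∀ ρ, (c + 1, ρ) ∈ (rectify c)^[T₀.card] T₀ ↔
      ((c, ρ) ∈ T₀ ∧ (c + 1, ρ) ∈ T₀) := by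
    intro ρ
    rw [hc1 ρ]
    constructor
    · rintro ⟨h1, h2⟩
      by_cases h3 : (c, ρ) ∈ T₀
      · exact ⟨h3, h1⟩
      · exact absurd (mem_freeRightRows.mpr ⟨h1, h3⟩) h2
    · rintro ⟨h1, h2⟩
      exact ⟨h2, fun h3 => (mem_freeRightRows.mp h3).2 h1⟩
  intro c₁ c₂ r₁ r₂ h1 h2 hr hcc
  by_cases e1 : c₁ = c
  · subst e1
    have h1' := (memc r₂).mp h1
    by_cases e2 : c₂ = c₁ + 1
    · subst e2
      have h2' := (memc1 r₁).mp h2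
      exact (memc r₁).mpr (Or.inl h2'.1)
    · have hne1 : c₂ ≠ c₁ := by omega
      have h2' : (c₂, r₁) ∈ T₀ := (hoth (c₂, r₁) hne1 e2).mp h2
      refine (memc r₁).mpr ?_
      rcases h1' with h3 | h3
      · exact Or.inl (hsw c₁ c₂ r₁ r₂ h3 h2' hr hcc)
      · exact Or.inr (hsw (c₁ + 1) c₂ r₁ r₂ h3 h2' hr (by omega))
  · by_cases e1' : c₁ = c + 1
    · subst e1'
      have hne1 : c₂ ≠ c := by omega
      have hne2 : c₂ ≠ c + 1 := by omega
      have h2' : (c₂, r₁) ∈ T₀ := (hoth (c₂, r₁) hne1 hne2).mp h2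
      have h1' := (memc1 r₂).mp h1
      exact (memc1 r₁).mpr ⟨hsw c c₂ r₁ r₂ h1'.1 h2' hr (by omega),
        hsw (c + 1) c₂ r₁ r₂ h1'.2 h2' hr hcc⟩
    · have h1' : (c₁, r₂) ∈ T₀ := (hoth (c₁, r₂) e1 e1').mp h1
      by_cases e2 : c₂ = c
      · subst e2
        have h2' := (memc r₁).mp h2
        refine (hoth (c₁, r₁) e1 e1').mpr ?_
        rcases h2' with h3 | h3
        · exact hsw c₁ c₂ r₁ r₂ h1' h3 hr hcc
        · exact hsw c₁ (c₂ + 1) r₁ r₂ h1' h3 hr (by omega)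
      · by_cases e2' : c₂ = c + 1
        · subst e2'
          have h2' := (memc1 r₁).mp h2
          refine (hoth (c₁, r₁) e1 e1').mpr ?_
          exact hsw c₁ c r₁ r₂ h1' h2'.1 hr (by omega)
        · have h2' : (c₂, r₁) ∈ T₀ := (hoth (c₂, r₁) e2 e2').mp h2
          exact (hoth (c₁, r₁) e1 e1').mpr (hsw c₁ c₂ r₁ r₂ h1' h2' hr hcc)

end Proofs

/-- **Proposition (southwest is preserved).** For `D` southwest and any column `c ≥ 1`,
`R_c^*(D)` is southwest; in particular `rect D` is a composition diagram. -/
theorem southwest_rectifyStar (D : Finset Cell) (hD : IsDiagram D) (hsw : Southwest D) :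
    (∀ c, 1 ≤ c → Southwest (rectifyStar c D)) ∧ IsCompositionDiagram (rect D) := by
  constructor
  · intro c _
    exact southwest_rectifyStar_single hsw c
  · have hex : ∃ S, Relation.ReflTransGen RectStep D S ∧ Rectified S := exists_rectified hD
    unfold rect
    split
    next h =>
      obtain ⟨hreach, hrect⟩ := h.choose_spec
      obtain ⟨hDS, hIS⟩ := invc_diagram_of_path hreach hD (southwest_invc hsw)
      exact isCompositionDiagram_of_leftJustified hDS
        (left_justified_of_rectified hDS hIS hrect)
    next h => exact absurd hex h

end Kohnert
end

section
/- Let D be a southwest diagram and U ∈ KD(D) such that e_r(U) = 0 for all r ≥ 1. Then the weight wt(U) is a partition (its parts weakly decrease), and if U' is any rectified diagram obtained from U by a sequence of rectification operators, then U' is the composition diagram D(wt(U)); in particular U' is independent of the sequence of rectification operators used. -/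
/-!
Definitions for Kohnert diagrams, Kohnert crystals, rectification, Kohnert labelings,
Demazure characters and Kohnert polynomials, following Assaf,
"Demazure crystals for Kohnert polynomials".
-/

namespace Kohnert

/-! ### Auxiliary lemmas for the proof of `highestWeight_rect` -/

section Aux

open Finset

lemma mem_freeUpCols {T : Finset Cell} {i a : ℕ} :
    a ∈ freeUpCols T i ↔ (a, i + 1) ∈ T ∧ (a, i) ∉ T := by
  constructor
  · intro h
    rw [freeUpCols, Finset.mem_image] at h
    obtain ⟨⟨a', b'⟩, hx, rfl⟩ := h
    rw [Finset.mem_filter] at hx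
    obtain ⟨hT, h2, h3⟩ := hx
    simp only at h2 h3 ⊢
    subst h2
    exact ⟨hT, h3⟩
  · rintro ⟨h1, h2⟩
    rw [freeUpCols, Finset.mem_image]
    exact ⟨(a, i + 1), Finset.mem_filter.2 ⟨h1, rfl, h2⟩, rfl⟩

lemma mem_freeDownCols {T : Finset Cell} {i a : ℕ} :
    a ∈ freeDownCols T i ↔ (a, i) ∈ T ∧ (a, i + 1) ∉ T := by
  constructor
  · intro h
    rw [freeDownCols, Finset.mem_image] at h
    obtain ⟨⟨a', b'⟩, hx, rfl⟩ := h
    rw [Finset.mem_filter] at hx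
    obtain ⟨hT, h2, h3⟩ := hx
    simp only at h2 h3 ⊢
    subst h2
    exact ⟨hT, h3⟩
  · rintro ⟨h1, h2⟩
    rw [freeDownCols, Finset.mem_image]
    exact ⟨(a, i), Finset.mem_filter.2 ⟨h1, rfl, h2⟩, rfl⟩

lemma card_filter_erase {X : Finset ℕ} {b : ℕ} (p : ℕ → Prop) [DecidablePred p] (hb : b ∈ X) :
    ((X.erase b).filter p).card + (if p b then 1 else 0) = (X.filter p).card := by
  rw [Finset.filter_erase]
  by_cases hpb : p b
  · rw [if_pos hpb]
    exact Finset.card_erase_add_one (Finset.mem_filter.2 ⟨hb, hpb⟩)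
  · rw [if_neg hpb, Finset.erase_eq_of_notMem (fun h => hpb (Finset.mem_filter.1 h).2)]
    omega

lemma card_filter_insert {X : Finset ℕ} {a : ℕ} (p : ℕ → Prop) [DecidablePred p] (ha : a ∉ X) :
    ((insert a X).filter p).card = (X.filter p).card + (if p a then 1 else 0) := by
  rw [Finset.filter_insert]
  by_cases hpa : p a
  · rw [if_pos hpa, if_pos hpa,
      Finset.card_insert_of_notMem (fun h => ha (Finset.mem_filter.1 h).1)]
  · rw [if_neg hpa, if_neg hpa]
    omega

lemma card_filter_insert_erase {X : Finset ℕ} {a b : ℕ} (p : ℕ → Prop) [DecidablePred p]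
    (hb : b ∈ X) (ha : a ∉ X) :
    ((insert a (X.erase b)).filter p).card + (if p b then 1 else 0)
      = (X.filter p).card + (if p a then 1 else 0) := by
  rw [card_filter_insert p (fun h => ha (Finset.mem_of_mem_erase h))]
  have h2 := card_filter_erase p hb
  omega

lemma not_unpairedUp_count {T : Finset Cell} {i c : ℕ} (h : ¬ UnpairedUp T i c)
    (h1 : (c, i + 1) ∈ T) (h2 : (c, i) ∉ T) :
    ((freeUpCols T i).filter (fun d => d ≤ c)).card
      ≤ ((freeDownCols T i).filter (fun d => d < c)).card := by
  unfold UnpairedUp at h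
  push_neg at h
  exact h h1 h2

lemma hw_global {T : Finset Cell} {i : ℕ} (h : ∀ d, ¬ UnpairedUp T i d) (d : ℕ) :
    ((freeUpCols T i).filter (fun d' => d' ≤ d)).card
      ≤ ((freeDownCols T i).filter (fun d' => d' < d)).card := by
  induction d with
  | zero =>
    by_cases h0 : 0 ∈ freeUpCols T i
    · exact not_unpairedUp_count (h 0) (mem_freeUpCols.1 h0).1 (mem_freeUpCols.1 h0).2
    · have he : (freeUpCols T i).filter (fun d' => d' ≤ 0) = ∅ := by
        rw [Finset.filter_eq_empty_iff]
        intro a ha hle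
        have hz : a = 0 := by omega
        subst hz
        exact h0 ha
      rw [he]
      simp
  | succ d ih =>
    by_cases h0 : d + 1 ∈ freeUpCols T i
    · exact not_unpairedUp_count (h (d + 1)) (mem_freeUpCols.1 h0).1 (mem_freeUpCols.1 h0).2
    · have he : (freeUpCols T i).filter (fun d' => d' ≤ d + 1)
          = (freeUpCols T i).filter (fun d' => d' ≤ d) := by
        ext a
        rw [Finset.mem_filter, Finset.mem_filter]
        constructor
        · rintro ⟨ha, hle⟩
          refine ⟨ha, ?_⟩
          rcases Nat.lt_or_ge a (d + 1) with hlt | hge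
          · omega
          · exfalso
            have : a = d + 1 := by omega
            subst this
            exact h0 ha
        · rintro ⟨ha, hle⟩
          exact ⟨ha, by omega⟩
      rw [he]
      refine ih.trans (Finset.card_le_card ?_)
      intro a ha
      rw [Finset.mem_filter] at ha ⊢
      exact ⟨ha.1, by omega⟩

lemma wt_apply (T : Finset Cell) (i : ℕ) : wt T i = (T.filter fun x => x.2 = i).card := by
  rw [wt, Finsupp.finset_sum_apply, Finset.card_filter]
  refine Finset.sum_congr rfl fun x _ => ?_
  rw [Finsupp.single_apply]

lemma wt_le_of_hw (T : Finset Cell) (hw : ∀ i d, 1 ≤ i → ¬ UnpairedUp T i d)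
    (i : ℕ) (hi : 1 ≤ i) : wt T (i + 1) ≤ wt T i := by
  rw [wt_apply, wt_apply]
  classical
  have hsplit1 : (T.filter fun x => x.2 = i + 1).card
      = (T.filter fun x => x.2 = i + 1 ∧ (x.1, i) ∈ T).card
        + (T.filter fun x => x.2 = i + 1 ∧ (x.1, i) ∉ T).card := by
    rw [← Finset.filter_filter, ← Finset.filter_filter]
    exact (Finset.card_filter_add_card_filter_not (fun x : Cell => (x.1, i) ∈ T)).symm
  have hsplit2 : (T.filter fun x => x.2 = i).card
      = (T.filter fun x => x.2 = i ∧ (x.1, i + 1) ∈ T).card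
        + (T.filter fun x => x.2 = i ∧ (x.1, i + 1) ∉ T).card := by
    rw [← Finset.filter_filter, ← Finset.filter_filter]
    exact (Finset.card_filter_add_card_filter_not (fun x : Cell => (x.1, i + 1) ∈ T)).symm
  have hcommon : (T.filter fun x => x.2 = i + 1 ∧ (x.1, i) ∈ T).card
      = (T.filter fun x => x.2 = i ∧ (x.1, i + 1) ∈ T).card := by
    apply Finset.card_bij (fun x _ => (x.1, i))
    · intro x hx
      rw [Finset.mem_filter] at hx ⊢
      obtain ⟨hT, h2, h3⟩ := hx
      refine ⟨h3, rfl, ?_⟩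
      have hx' : (x.1, i + 1) = x := by rw [← h2]
      rw [hx']
      exact hT
    · intro x hx y hy hxy
      rw [Finset.mem_filter] at hx hy
      injection hxy with h1 h2
      exact Prod.ext h1 (hx.2.1.trans hy.2.1.symm)
    · intro y hy
      rw [Finset.mem_filter] at hy
      obtain ⟨hT, h2, h3⟩ := hy
      refine ⟨(y.1, i + 1), Finset.mem_filter.2 ⟨h3, rfl, ?_⟩, ?_⟩
      · have hy' : (y.1, i) = y := by rw [← h2]
        rw [hy']
        exact hT
      · simp only
        exact Prod.ext rfl h2.symm
  have e1 : (T.filter fun x => x.2 = i + 1 ∧ (x.1, i) ∉ T).card = (freeUpCols T i).card := by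
    rw [freeUpCols, Finset.card_image_of_injOn]
    intro x hx y hy hxy
    rw [Finset.mem_coe, Finset.mem_filter] at hx hy
    exact Prod.ext hxy (hx.2.1.trans hy.2.1.symm)
  have e2 : (T.filter fun x => x.2 = i ∧ (x.1, i + 1) ∉ T).card = (freeDownCols T i).card := by
    rw [freeDownCols, Finset.card_image_of_injOn]
    intro x hx y hy hxy
    rw [Finset.mem_coe, Finset.mem_filter] at hx hy
    exact Prod.ext hxy (hx.2.1.trans hy.2.1.symm)
  have e3 : (freeUpCols T i).filter (fun d' => d' ≤ T.sup Prod.fst + 1) = freeUpCols T i := by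
    apply Finset.filter_true_of_mem
    intro a ha
    have := Finset.le_sup (f := Prod.fst) (mem_freeUpCols.1 ha).1
    simp only at this
    omega
  have e4 : (freeDownCols T i).filter (fun d' => d' < T.sup Prod.fst + 1) = freeDownCols T i := by
    apply Finset.filter_true_of_mem
    intro a ha
    have := Finset.le_sup (f := Prod.fst) (mem_freeDownCols.1 ha).1
    simp only at this
    omega
  have hfree : (freeUpCols T i).card ≤ (freeDownCols T i).card := by
    have := hw_global (fun d => hw i d hi) (T.sup Prod.fst + 1)
    rwa [e3, e4] at this
  omega

lemma isDiagram_of_KD {D U : Finset Cell} (hD : IsDiagram D) (hU : U ∈ KD D) : IsDiagram U := by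
  induction hU with
  | refl => exact hD
  | tail _ h ih =>
    obtain ⟨c, r, r', hcr, _, hr1, _, _, _, rfl⟩ := h
    intro x hx
    rcases Finset.mem_insert.1 hx with rfl | hx'
    · exact ⟨(ih _ hcr).1, hr1⟩
    · exact ih _ (Finset.mem_of_mem_erase hx')

lemma wt_rectify (c : ℕ) (T : Finset Cell) : wt (rectify c T) = wt T := by
  unfold rectify
  split_ifs with h
  · have hmem : ColUnpaired T c (sInf {r | ColUnpaired T c r}) := Nat.sInf_mem h
    obtain ⟨h1, h2, _⟩ := hmem
    have hnot : (c, sInf {r | ColUnpaired T c r}) ∉ T.erase (c + 1, sInf {r | ColUnpaired T c r}) :=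
      fun hx => h2 (Finset.mem_of_mem_erase hx)
    rw [wt, wt, Finset.sum_insert hnot, ← Finset.add_sum_erase T _ h1]
  · rfl

lemma rectify_hw (T : Finset Cell) (c : ℕ) (hc : 1 ≤ c) (hT : IsDiagram T)
    (hw : ∀ i d, 1 ≤ i → ¬ UnpairedUp T i d) :
    IsDiagram (rectify c T) ∧ ∀ i d, 1 ≤ i → ¬ UnpairedUp (rectify c T) i d := by
  unfold rectify
  split_ifs with hex
  swap
  · exact ⟨hT, hw⟩
  have hR : ColUnpaired T c (sInf {r | ColUnpaired T c r}) := Nat.sInf_mem hex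
  set R := sInf {r | ColUnpaired T c r} with hRdef
  obtain ⟨h1, h2, h3⟩ := hR
  have hmin : ∀ r, r < R → ¬ ColUnpaired T c r := fun r hr => Nat.notMem_of_lt_sInf hr
  set S : Finset Cell := insert (c, R) (T.erase (c + 1, R)) with hSdef
  have hR1 : 1 ≤ R := (hT _ h1).2
  have memS_ne : ∀ a j, j ≠ R → ((a, j) ∈ S ↔ (a, j) ∈ T) := by
    intro a j hj
    rw [hSdef, Finset.mem_insert, Finset.mem_erase]
    constructor
    · rintro (h | h)
      · exact absurd (congrArg Prod.snd h) hj
      · exact h.2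
    · intro h
      exact Or.inr ⟨fun h' => hj (congrArg Prod.snd h'), h⟩
  have memS_R : ∀ a, ((a, R) ∈ S ↔ (a = c ∨ ((a, R) ∈ T ∧ a ≠ c + 1))) := by
    intro a
    rw [hSdef, Finset.mem_insert, Finset.mem_erase]
    constructor
    · rintro (h | ⟨hne, h⟩)
      · exact Or.inl (congrArg Prod.fst h)
      · exact Or.inr ⟨h, fun h' => hne (by rw [h'])⟩
    · rintro (rfl | ⟨h, hne⟩)
      · exact Or.inl rfl
      · exact Or.inr ⟨fun h' => hne (congrArg Prod.fst h'), h⟩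
  clear_value S R
  constructor
  · intro x hx
    rw [hSdef] at hx
    rcases Finset.mem_insert.1 hx with rfl | hx'
    · exact ⟨hc, hR1⟩
    · exact hT _ (Finset.mem_of_mem_erase hx')
  intro i d hi
  by_cases hiR : i = R
  · -- lower-row case : the moved cell lies in row i = R
    have h1' : (c + 1, i) ∈ T := by rw [hiR]; exact h1
    have h2' : (c, i) ∉ T := by rw [hiR]; exact h2
    have memS_Ri : ∀ a, ((a, i) ∈ S ↔ (a = c ∨ ((a, i) ∈ T ∧ a ≠ c + 1))) := by
      intro a
      rw [hiR]
      exact memS_R a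
    by_cases u1 : (c, i + 1) ∈ T <;> by_cases u2 : (c + 1, i + 1) ∈ T
    · -- u1, u2
      have hcfu : c ∈ freeUpCols T i := mem_freeUpCols.2 ⟨u1, h2'⟩
      have hc1fu : c + 1 ∉ freeUpCols T i := fun h => (mem_freeUpCols.1 h).2 h1'
      have hfu : freeUpCols S i = insert (c + 1) ((freeUpCols T i).erase c) := by
        ext a
        rw [mem_freeUpCols, Finset.mem_insert, Finset.mem_erase, mem_freeUpCols,
          memS_ne a (i + 1) (by omega), memS_Ri a]
        constructor
        · rintro ⟨hup, hdn⟩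
          by_cases hac1 : a = c + 1
          · exact Or.inl hac1
          · refine Or.inr ⟨?_, hup, ?_⟩
            · rintro rfl; exact hdn (Or.inl rfl)
            · intro hmem; exact hdn (Or.inr ⟨hmem, hac1⟩)
        · rintro (rfl | ⟨hac, hup, hdn⟩)
          · refine ⟨u2, ?_⟩
            rintro (h | ⟨hmem, hne⟩)
            · omega
            · exact hne rfl
          · refine ⟨hup, ?_⟩
            rintro (rfl | ⟨hmem, _⟩)
            · exact hac rfl
            · exact hdn hmem
      have hfd : freeDownCols S i = freeDownCols T i := by
        ext a
        rw [mem_freeDownCols, mem_freeDownCols, memS_Ri a, memS_ne a (i + 1) (by omega)]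
        constructor
        · rintro ⟨(rfl | ⟨hmem, hne⟩), hdn⟩
          · exact absurd u1 hdn
          · exact ⟨hmem, hdn⟩
        · rintro ⟨hmem, hdn⟩
          refine ⟨Or.inr ⟨hmem, ?_⟩, hdn⟩
          rintro rfl
          exact hdn u2
      rintro ⟨hd1, hd2, hd3⟩
      rw [hfu, hfd] at hd3
      have e1 := card_filter_insert_erase (a := c + 1) (b := c) (fun d' => d' ≤ d) hcfu hc1fu
      have hwgd := hw_global (fun d' => hw _ d' hi) d
      have hb : (if c + 1 ≤ d then 1 else 0) ≤ (if c ≤ d then 1 else 0) := by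
        split_ifs <;> omega
      omega
    · -- u1, ¬u2
      have hcfu : c ∈ freeUpCols T i := mem_freeUpCols.2 ⟨u1, h2'⟩
      have hc1fd : c + 1 ∈ freeDownCols T i := mem_freeDownCols.2 ⟨h1', u2⟩
      have hfu : freeUpCols S i = (freeUpCols T i).erase c := by
        ext a
        rw [mem_freeUpCols, Finset.mem_erase, mem_freeUpCols,
          memS_ne a (i + 1) (by omega), memS_Ri a]
        constructor
        · rintro ⟨hup, hdn⟩
          refine ⟨?_, hup, ?_⟩
          · rintro rfl; exact hdn (Or.inl rfl)
          · intro hmem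
            by_cases hac1 : a = c + 1
            · subst hac1; exact u2 hup
            · exact hdn (Or.inr ⟨hmem, hac1⟩)
        · rintro ⟨hac, hup, hdn⟩
          refine ⟨hup, ?_⟩
          rintro (rfl | ⟨hmem, _⟩)
          · exact hac rfl
          · exact hdn hmem
      have hfd : freeDownCols S i = (freeDownCols T i).erase (c + 1) := by
        ext a
        rw [mem_freeDownCols, Finset.mem_erase, mem_freeDownCols,
          memS_Ri a, memS_ne a (i + 1) (by omega)]
        constructor
        · rintro ⟨(rfl | ⟨hmem, hne⟩), hdn⟩
          · exact absurd u1 hdn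
          · exact ⟨hne, hmem, hdn⟩
        · rintro ⟨hne, hmem, hdn⟩
          exact ⟨Or.inr ⟨hmem, hne⟩, hdn⟩
      rintro ⟨hd1, hd2, hd3⟩
      rw [hfu, hfd] at hd3
      have e1 := card_filter_erase (X := freeUpCols T i) (fun d' => d' ≤ d) hcfu
      have e2 := card_filter_erase (X := freeDownCols T i) (fun d' => d' < d) hc1fd
      have hwgd := hw_global (fun d' => hw _ d' hi) d
      have hb : (if c + 1 < d then 1 else 0) ≤ (if c ≤ d then 1 else 0) := by
        split_ifs <;> omega
      omega
    · -- ¬u1, u2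
      have hc1fu : c + 1 ∉ freeUpCols T i := fun h => (mem_freeUpCols.1 h).2 h1'
      have hcfd : c ∉ freeDownCols T i := fun h => h2' (mem_freeDownCols.1 h).1
      have hfu : freeUpCols S i = insert (c + 1) (freeUpCols T i) := by
        ext a
        rw [mem_freeUpCols, Finset.mem_insert, mem_freeUpCols,
          memS_ne a (i + 1) (by omega), memS_Ri a]
        constructor
        · rintro ⟨hup, hdn⟩
          by_cases hac1 : a = c + 1
          · exact Or.inl hac1
          · refine Or.inr ⟨hup, ?_⟩
            intro hmem
            rcases eq_or_ne a c with rfl | hac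
            · exact u1 hup
            · exact hdn (Or.inr ⟨hmem, hac1⟩)
        · rintro (rfl | ⟨hup, hdn⟩)
          · refine ⟨u2, ?_⟩
            rintro (h | ⟨_, hne⟩)
            · omega
            · exact hne rfl
          · refine ⟨hup, ?_⟩
            rintro (rfl | ⟨hmem, _⟩)
            · exact u1 hup
            · exact hdn hmem
      have hfd : freeDownCols S i = insert c (freeDownCols T i) := by
        ext a
        rw [mem_freeDownCols, Finset.mem_insert, mem_freeDownCols,
          memS_Ri a, memS_ne a (i + 1) (by omega)]
        constructor
        · rintro ⟨(rfl | ⟨hmem, hne⟩), hdn⟩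
          · exact Or.inl rfl
          · exact Or.inr ⟨hmem, hdn⟩
        · rintro (rfl | ⟨hmem, hdn⟩)
          · exact ⟨Or.inl rfl, u1⟩
          · refine ⟨Or.inr ⟨hmem, ?_⟩, hdn⟩
            rintro rfl
            exact hdn u2
      rintro ⟨hd1, hd2, hd3⟩
      rw [hfu, hfd] at hd3
      have e1 := card_filter_insert (X := freeUpCols T i) (fun d' => d' ≤ d) hc1fu
      have e2 := card_filter_insert (X := freeDownCols T i) (fun d' => d' < d) hcfd
      have hwgd := hw_global (fun d' => hw _ d' hi) d
      have hb : (if c + 1 ≤ d then 1 else 0) = (if c < d then 1 else 0) := by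
        split_ifs <;> omega
      omega
    · -- ¬u1, ¬u2
      have hc1fd : c + 1 ∈ freeDownCols T i := mem_freeDownCols.2 ⟨h1', u2⟩
      have hcfd : c ∉ freeDownCols T i := fun h => h2' (mem_freeDownCols.1 h).1
      have hfu : freeUpCols S i = freeUpCols T i := by
        ext a
        rw [mem_freeUpCols, mem_freeUpCols, memS_ne a (i + 1) (by omega), memS_Ri a]
        constructor
        · rintro ⟨hup, hdn⟩
          refine ⟨hup, fun hmem => ?_⟩
          by_cases hac1 : a = c + 1
          · subst hac1; exact u2 hup
          · exact hdn (Or.inr ⟨hmem, hac1⟩)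
        · rintro ⟨hup, hdn⟩
          refine ⟨hup, ?_⟩
          rintro (rfl | ⟨hmem, _⟩)
          · exact u1 hup
          · exact hdn hmem
      have hfd : freeDownCols S i = insert c ((freeDownCols T i).erase (c + 1)) := by
        ext a
        rw [mem_freeDownCols, Finset.mem_insert, Finset.mem_erase, mem_freeDownCols,
          memS_Ri a, memS_ne a (i + 1) (by omega)]
        constructor
        · rintro ⟨(rfl | ⟨hmem, hne⟩), hdn⟩
          · exact Or.inl rfl
          · exact Or.inr ⟨hne, hmem, hdn⟩
        · rintro (rfl | ⟨hne, hmem, hdn⟩)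
          · exact ⟨Or.inl rfl, u1⟩
          · exact ⟨Or.inr ⟨hmem, hne⟩, hdn⟩
      rintro ⟨hd1, hd2, hd3⟩
      rw [hfu, hfd] at hd3
      have e2 := card_filter_insert_erase (a := c) (b := c + 1) (fun d' => d' < d) hc1fd hcfd
      have hwgd := hw_global (fun d' => hw _ d' hi) d
      have hb : (if c + 1 < d then 1 else 0) ≤ (if c < d then 1 else 0) := by
        split_ifs <;> omega
      omega
  · by_cases hi1R : i + 1 = R
    · -- upper-row case : the moved cell lies in row i + 1 = R
      rw [← hi1R] at h1 h2 h3
      have memS_up : ∀ a, ((a, i + 1) ∈ S ↔ (a = c ∨ ((a, i + 1) ∈ T ∧ a ≠ c + 1))) := by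
        intro a
        rw [hi1R]
        exact memS_R a
      by_cases v1 : (c, i) ∈ T <;> by_cases v2 : (c + 1, i) ∈ T
      · -- v1, v2
        have hcfd : c ∈ freeDownCols T i := mem_freeDownCols.2 ⟨v1, h2⟩
        have hc1fd : c + 1 ∉ freeDownCols T i := fun h => (mem_freeDownCols.1 h).2 h1
        have hfu : freeUpCols S i = freeUpCols T i := by
          ext a
          rw [mem_freeUpCols, mem_freeUpCols, memS_up a, memS_ne a i hiR]
          constructor
          · rintro ⟨(rfl | ⟨hup, _⟩), hdn⟩
            · exact absurd v1 hdn
            · exact ⟨hup, hdn⟩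
          · rintro ⟨hup, hdn⟩
            refine ⟨Or.inr ⟨hup, ?_⟩, hdn⟩
            rintro rfl
            exact hdn v2
        have hfd : freeDownCols S i = insert (c + 1) ((freeDownCols T i).erase c) := by
          ext a
          rw [mem_freeDownCols, Finset.mem_insert, Finset.mem_erase, mem_freeDownCols,
            memS_ne a i hiR, memS_up a]
          constructor
          · rintro ⟨hmem, hdn⟩
            by_cases hac1 : a = c + 1
            · exact Or.inl hac1
            · refine Or.inr ⟨?_, hmem, fun hup => hdn (Or.inr ⟨hup, hac1⟩)⟩
              rintro rfl
              exact hdn (Or.inl rfl)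
          · rintro (rfl | ⟨hac, hmem, hdn⟩)
            · refine ⟨v2, ?_⟩
              rintro (h | ⟨_, hne⟩)
              · omega
              · exact hne rfl
            · refine ⟨hmem, ?_⟩
              rintro (rfl | ⟨hup, _⟩)
              · exact hac rfl
              · exact hdn hup
        rintro ⟨hd1, hd2, hd3⟩
        have hd2T : (d, i) ∉ T := fun h => hd2 ((memS_ne d i hiR).2 h)
        have hdc : d ≠ c := fun h => hd2T (h ▸ v1)
        have hdc1 : d ≠ c + 1 := fun h => hd2T (h ▸ v2)
        rw [hfu, hfd] at hd3
        have e2 := card_filter_insert_erase (a := c + 1) (b := c) (fun d' => d' < d) hcfd hc1fd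
        have hwgd := hw_global (fun d' => hw i d' hi) d
        have hb : (if c < d then 1 else 0) = (if c + 1 < d then 1 else 0) := by
          split_ifs <;> omega
        omega
      · -- v1, ¬v2
        have hc1fu : c + 1 ∈ freeUpCols T i := mem_freeUpCols.2 ⟨h1, v2⟩
        have hcfd : c ∈ freeDownCols T i := mem_freeDownCols.2 ⟨v1, h2⟩
        have hfu : freeUpCols S i = (freeUpCols T i).erase (c + 1) := by
          ext a
          rw [mem_freeUpCols, Finset.mem_erase, mem_freeUpCols, memS_up a, memS_ne a i hiR]
          constructor
          · rintro ⟨(rfl | ⟨hup, hne⟩), hdn⟩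
            · exact absurd v1 hdn
            · exact ⟨hne, hup, hdn⟩
          · rintro ⟨hne, hup, hdn⟩
            exact ⟨Or.inr ⟨hup, hne⟩, hdn⟩
        have hfd : freeDownCols S i = (freeDownCols T i).erase c := by
          ext a
          rw [mem_freeDownCols, Finset.mem_erase, mem_freeDownCols, memS_ne a i hiR, memS_up a]
          constructor
          · rintro ⟨hmem, hdn⟩
            refine ⟨?_, hmem, ?_⟩
            · rintro rfl
              exact hdn (Or.inl rfl)
            · intro hup
              by_cases hac1 : a = c + 1
              · subst hac1; exact v2 hmem
              · exact hdn (Or.inr ⟨hup, hac1⟩)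
          · rintro ⟨hac, hmem, hdn⟩
            refine ⟨hmem, ?_⟩
            rintro (rfl | ⟨hup, _⟩)
            · exact hac rfl
            · exact hdn hup
        rintro ⟨hd1, hd2, hd3⟩
        rw [hfu, hfd] at hd3
        have e1 := card_filter_erase (X := freeUpCols T i) (fun d' => d' ≤ d) hc1fu
        have e2 := card_filter_erase (X := freeDownCols T i) (fun d' => d' < d) hcfd
        have hwgd := hw_global (fun d' => hw i d' hi) d
        have hb : (if c < d then 1 else 0) = (if c + 1 ≤ d then 1 else 0) := by
          split_ifs <;> omega
        omega
      · -- ¬v1, v2 : impossible by minimality of R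
        intro _
        have hnc := hmin i (by omega)
        unfold ColUnpaired at hnc
        push_neg at hnc
        have hge := hnc v2 v1
        have hLeq : (freeLeftRows T c).filter (fun s => i < s)
            = (freeLeftRows T c).filter (fun s => i + 1 < s) := by
          ext s
          rw [Finset.mem_filter, Finset.mem_filter]
          constructor
          · rintro ⟨hs, hlt⟩
            refine ⟨hs, ?_⟩
            rcases Nat.lt_or_ge (i + 1) s with h | h
            · exact h
            · exfalso
              have hsi : s = i + 1 := by omega
              subst hsi
              exact h2 (mem_freeLeftRows.1 hs).1
          · rintro ⟨hs, hlt⟩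
            exact ⟨hs, by omega⟩
        have hRmem : i ∈ freeRightRows T c := mem_freeRightRows.2 ⟨v2, v1⟩
        have hcard : ((freeRightRows T c).filter (fun s => i ≤ s)).card
            = ((freeRightRows T c).filter (fun s => i + 1 ≤ s)).card + 1 := by
          have hsplit : (freeRightRows T c).filter (fun s => i ≤ s)
              = insert i ((freeRightRows T c).filter (fun s => i + 1 ≤ s)) := by
            ext s
            rw [Finset.mem_filter, Finset.mem_insert, Finset.mem_filter]
            constructor
            · rintro ⟨hs, hle⟩
              rcases eq_or_ne s i with rfl | hne
              · exact Or.inl rfl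
              · exact Or.inr ⟨hs, by omega⟩
            · rintro (rfl | ⟨hs, hle⟩)
              · exact ⟨hRmem, le_refl _⟩
              · exact ⟨hs, by omega⟩
          rw [hsplit, Finset.card_insert_of_notMem]
          intro h
          have := (Finset.mem_filter.1 h).2
          omega
        rw [hLeq] at hge
        omega
      · -- ¬v1, ¬v2
        have hc1fu : c + 1 ∈ freeUpCols T i := mem_freeUpCols.2 ⟨h1, v2⟩
        have hcfu : c ∉ freeUpCols T i := fun h => h2 (mem_freeUpCols.1 h).1
        have hfu : freeUpCols S i = insert c ((freeUpCols T i).erase (c + 1)) := by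
          ext a
          rw [mem_freeUpCols, Finset.mem_insert, Finset.mem_erase, mem_freeUpCols,
            memS_up a, memS_ne a i hiR]
          constructor
          · rintro ⟨(rfl | ⟨hup, hne⟩), hdn⟩
            · exact Or.inl rfl
            · exact Or.inr ⟨hne, hup, hdn⟩
          · rintro (rfl | ⟨hne, hup, hdn⟩)
            · exact ⟨Or.inl rfl, v1⟩
            · exact ⟨Or.inr ⟨hup, hne⟩, hdn⟩
        have hfd : freeDownCols S i = freeDownCols T i := by
          ext a
          rw [mem_freeDownCols, mem_freeDownCols, memS_ne a i hiR, memS_up a]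
          constructor
          · rintro ⟨hmem, hdn⟩
            refine ⟨hmem, fun hup => ?_⟩
            by_cases hac1 : a = c + 1
            · subst hac1; exact v2 hmem
            · exact hdn (Or.inr ⟨hup, hac1⟩)
          · rintro ⟨hmem, hdn⟩
            refine ⟨hmem, ?_⟩
            rintro (rfl | ⟨hup, _⟩)
            · exact v1 hmem
            · exact hdn hup
        rintro ⟨hd1, hd2, hd3⟩
        rw [hfu, hfd] at hd3
        have e1 := card_filter_insert_erase (a := c) (b := c + 1) (fun d' => d' ≤ d) hc1fu hcfu
        have hwgd := hw_global (fun d' => hw i d' hi) d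
        rcases Nat.lt_trichotomy d c with hlt | heq | hgt
        · have hb1 : (if (c : ℕ) ≤ d then 1 else 0) = 0 := by split_ifs <;> omega
          have hb2 : (if c + 1 ≤ d then 1 else 0) = 0 := by split_ifs <;> omega
          omega
        · subst heq
          have hwgd1 := hw_global (fun d' => hw i d' hi) (d + 1)
          have hA : ((freeUpCols T i).filter (fun d' => d' ≤ d + 1)).card
              = ((freeUpCols T i).filter (fun d' => d' ≤ d)).card + 1 := by
            have hsplit : (freeUpCols T i).filter (fun d' => d' ≤ d + 1)
                = insert (d + 1) ((freeUpCols T i).filter (fun d' => d' ≤ d)) := by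
              ext a
              rw [Finset.mem_filter, Finset.mem_insert, Finset.mem_filter]
              constructor
              · rintro ⟨ha, hle⟩
                rcases eq_or_ne a (d + 1) with rfl | hne
                · exact Or.inl rfl
                · exact Or.inr ⟨ha, by omega⟩
              · rintro (rfl | ⟨ha, hle⟩)
                · exact ⟨hc1fu, le_refl _⟩
                · exact ⟨ha, by omega⟩
            rw [hsplit, Finset.card_insert_of_notMem]
            intro h
            have := (Finset.mem_filter.1 h).2
            omega
          have hB : ((freeDownCols T i).filter (fun d' => d' < d + 1)).card
              = ((freeDownCols T i).filter (fun d' => d' < d)).card := by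
            congr 1
            ext a
            rw [Finset.mem_filter, Finset.mem_filter]
            constructor
            · rintro ⟨ha, hlt⟩
              refine ⟨ha, ?_⟩
              rcases eq_or_ne a d with rfl | hne
              · exact absurd (mem_freeDownCols.1 ha).1 v1
              · omega
            · rintro ⟨ha, hlt⟩
              exact ⟨ha, by omega⟩
          have hb1 : (if (d : ℕ) ≤ d then 1 else 0) = 1 := by split_ifs <;> omega
          have hb2 : (if d + 1 ≤ d then 1 else 0) = 0 := by split_ifs <;> omega
          omega
        · have hb1 : (if (c : ℕ) ≤ d then 1 else 0) = 1 := by split_ifs <;> omega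
          have hb2 : (if c + 1 ≤ d then 1 else 0) = 1 := by split_ifs <;> omega
          omega
    · -- rows i and i + 1 are untouched
      rintro ⟨hd1, hd2, hd3⟩
      have hfu : freeUpCols S i = freeUpCols T i := by
        ext a
        rw [mem_freeUpCols, mem_freeUpCols, memS_ne a (i + 1) hi1R, memS_ne a i hiR]
      have hfd : freeDownCols S i = freeDownCols T i := by
        ext a
        rw [mem_freeDownCols, mem_freeDownCols, memS_ne a i hiR, memS_ne a (i + 1) hi1R]
      rw [hfu, hfd] at hd3
      exact hw i d hi ⟨(memS_ne d (i + 1) hi1R).1 hd1, fun h => hd2 ((memS_ne d i hiR).2 h), hd3⟩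

lemma left_of_rect (T : Finset Cell) (hrect : Rectified T) {i d : ℕ} (hi : 1 ≤ i)
    (hdrop : ∀ d' s, i ≤ s → (d', s) ∈ T → (d', i) ∈ T)
    (hd : (d, i) ∈ T) : ∀ e, 1 ≤ e → e ≤ d → (e, i) ∈ T := by
  suffices h : ∀ n e, 1 ≤ e → e + n = d → (e, i) ∈ T by
    intro e he hed
    exact h (d - e) e he (by omega)
  intro n
  induction n with
  | zero =>
    intro e he h0
    have : e = d := by omega
    rwa [this]
  | succ n ih =>
    intro e he hed
    have hnext : (e + 1, i) ∈ T := ih (e + 1) (by omega) (by omega)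
    have hcard := hrect e i he hi
    have hpos : 0 < (T.filter fun x => x.1 = e + 1 ∧ i ≤ x.2).card :=
      Finset.card_pos.2 ⟨(e + 1, i), Finset.mem_filter.2 ⟨hnext, rfl, le_refl i⟩⟩
    have hpos2 : 0 < (T.filter fun x => x.1 = e ∧ i ≤ x.2).card := lt_of_lt_of_le hpos hcard
    obtain ⟨x, hx⟩ := Finset.card_pos.1 hpos2
    rw [Finset.mem_filter] at hx
    obtain ⟨hxT, hx1, hx2⟩ := hx
    have hx' : (e, x.2) ∈ T := by
      have hxe : ((e : ℕ), x.2) = x := by rw [← hx1]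
      rw [hxe]
      exact hxT
    exact hdrop e x.2 hx2 hx'

lemma nest_of_hw_rect (T : Finset Cell) (hdg : IsDiagram T) (hrect : Rectified T)
    (hw : ∀ i d, 1 ≤ i → ¬ UnpairedUp T i d) :
    ∀ i d, 1 ≤ i → (d, i + 1) ∈ T → (d, i) ∈ T := by
  have key : ∀ k i d, 1 ≤ i → T.sup Prod.snd ≤ i + k → (d, i + 1) ∈ T → (d, i) ∈ T := by
    intro k
    induction k with
    | zero =>
      intro i d hi hM hmem
      exact absurd (Finset.le_sup (f := Prod.snd) hmem) (by simp only; omega)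
    | succ k ih =>
      intro i d hi hM hmem
      have habove : ∀ j e, i + 1 ≤ j → (e, j + 1) ∈ T → (e, j) ∈ T :=
        fun j e hj h => ih j e (by omega) (by omega) h
      have hdrop : ∀ e s, i + 1 ≤ s → (e, s) ∈ T → (e, i + 1) ∈ T := by
        have haux : ∀ m e s, s = i + 1 + m → (e, s) ∈ T → (e, i + 1) ∈ T := by
          intro m
          induction m with
          | zero =>
            intro e s h0 h
            have : s = i + 1 := by omega
            rwa [this] at h
          | succ m ihm =>
            intro e s h0 h
            have h1 : (e, (i + 1 + m) + 1) ∈ T := by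
              have : s = i + 1 + m + 1 := by omega
              rwa [this] at h
            exact ihm e (i + 1 + m) rfl (habove (i + 1 + m) e (by omega) h1)
        intro e s hs h
        exact haux (s - (i + 1)) e s (by omega) h
      by_contra hnot
      have hUn := hw i d hi
      unfold UnpairedUp at hUn
      push_neg at hUn
      have hcount := hUn hmem hnot
      have hdfu : d ∈ (freeUpCols T i).filter (fun d' => d' ≤ d) :=
        Finset.mem_filter.2 ⟨mem_freeUpCols.2 ⟨hmem, hnot⟩, le_refl d⟩
      have hpos : 0 < ((freeUpCols T i).filter (fun d' => d' ≤ d)).card :=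
        Finset.card_pos.2 ⟨d, hdfu⟩
      have hpos2 : 0 < ((freeDownCols T i).filter (fun d' => d' < d)).card := by omega
      obtain ⟨d', hd'⟩ := Finset.card_pos.1 hpos2
      rw [Finset.mem_filter] at hd'
      obtain ⟨hd'fd, hd'lt⟩ := hd'
      obtain ⟨hd'T, hd'up⟩ := mem_freeDownCols.1 hd'fd
      have hle := left_of_rect T hrect (by omega : 1 ≤ i + 1) hdrop hmem
      exact hd'up (hle d' (hdg _ hd'T).1 (by omega))
  intro i d hi hmem
  exact key (T.sup Prod.snd) i d hi (by omega) hmem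

lemma compDiagram_of_rect (T : Finset Cell) (hdg : IsDiagram T) (hrect : Rectified T)
    (hw : ∀ i d, 1 ≤ i → ¬ UnpairedUp T i d) : IsCompDiagramOf T (fun r => wt T r) := by
  have hnest := nest_of_hw_rect T hdg hrect hw
  have hdrop : ∀ r, 1 ≤ r → ∀ e s, r ≤ s → (e, s) ∈ T → (e, r) ∈ T := by
    intro r hr
    have haux : ∀ m e s, s = r + m → (e, s) ∈ T → (e, r) ∈ T := by
      intro m
      induction m with
      | zero =>
        intro e s h0 h
        have : s = r := by omega
        rwa [this] at h
      | succ m ihm =>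
        intro e s h0 h
        refine ihm e (r + m) rfl (hnest (r + m) e (by omega) ?_)
        have : s = r + m + 1 := by omega
        rwa [this] at h
    intro e s hs h
    exact haux (s - r) e s (by omega) h
  have hleft : ∀ r, 1 ≤ r → ∀ d, (d, r) ∈ T → ∀ e, 1 ≤ e → e ≤ d → (e, r) ∈ T :=
    fun r hr d hd => left_of_rect T hrect hr (hdrop r hr) hd
  intro cc r
  constructor
  · intro h
    refine ⟨(hdg _ h).1, (hdg _ h).2, ?_⟩
    show cc ≤ wt T r
    rw [wt_apply]
    have hcardle : (Finset.Icc 1 cc).card ≤ (T.filter fun x => x.2 = r).card := by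
      apply Finset.card_le_card_of_injOn (fun e => (e, r))
      · intro e he
        rw [Finset.mem_coe, Finset.mem_Icc] at he
        exact Finset.mem_filter.2 ⟨hleft r (hdg _ h).2 cc h e he.1 he.2, rfl⟩
      · intro a _ b _ hab
        injection hab
    rw [Nat.card_Icc] at hcardle
    omega
  · rintro ⟨hcc, hr, hwt⟩
    have hwt' : cc ≤ wt T r := hwt
    rw [wt_apply] at hwt'
    have hne : (T.filter fun x => x.2 = r).Nonempty := Finset.card_pos.1 (by omega)
    have hine : ((T.filter fun x => x.2 = r).image Prod.fst).Nonempty := hne.image _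
    set d0 := ((T.filter fun x => x.2 = r).image Prod.fst).max' hine with hd0
    have hd0mem : d0 ∈ (T.filter fun x => x.2 = r).image Prod.fst := Finset.max'_mem _ _
    obtain ⟨x, hx, hx1⟩ := Finset.mem_image.1 hd0mem
    rw [Finset.mem_filter] at hx
    have hxT : (d0, r) ∈ T := by
      have hxe : ((d0 : ℕ), r) = x := by rw [← hx1, ← hx.2]
      rw [hxe]
      exact hx.1
    have hcardim : ((T.filter fun x => x.2 = r).image Prod.fst).card
        = (T.filter fun x => x.2 = r).card := by
      apply Finset.card_image_of_injOn
      intro a ha b hb hab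
      rw [Finset.mem_coe, Finset.mem_filter] at ha hb
      exact Prod.ext hab (ha.2.trans hb.2.symm)
    have hsub : (T.filter fun x => x.2 = r).image Prod.fst ⊆ Finset.Icc 1 d0 := by
      intro a ha
      obtain ⟨y, hy, hy1⟩ := Finset.mem_image.1 ha
      rw [Finset.mem_filter] at hy
      rw [Finset.mem_Icc]
      exact ⟨hy1 ▸ (hdg _ hy.1).1, Finset.le_max' _ _ ha⟩
    have hcard2 : (T.filter fun x => x.2 = r).card ≤ d0 := by
      have h5 := Finset.card_le_card hsub
      rw [hcardim, Nat.card_Icc] at h5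
      omega
    exact hleft r hr d0 hxT cc hcc (by omega)


end Aux

/-- **Lemma (highest weights rectify).** For `D` southwest and `U ∈ KD(D)` with
`e_r(U) = 0` for all `r ≥ 1`, the weight of `U` is a partition and any rectified diagram
obtained from `U` by rectification operators is the composition diagram of `wt U`;
in particular it does not depend on the sequence used. -/
theorem highestWeight_rect (D U : Finset Cell) (hD : IsDiagram D) (hsw : Southwest D)
    (hU : U ∈ KD D) (hhw : ∀ r, 1 ≤ r → raise r U = none) :
    (∀ i, 1 ≤ i → wt U (i + 1) ≤ wt U i) ∧
    (∀ U', Relation.ReflTransGen RectStep U U' → Rectified U' →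
      IsCompDiagramOf U' (fun r => wt U r)) := by
  have hUdg : IsDiagram U := isDiagram_of_KD hD hU
  have hw0 : ∀ i d, 1 ≤ i → ¬ UnpairedUp U i d := by
    intro i d hi hUn
    have h := hhw i hi
    unfold raise at h
    rw [if_pos (⟨d, hUn⟩ : ∃ c', UnpairedUp U i c')] at h
    exact Option.some_ne_none _ h
  constructor
  · exact fun i hi => wt_le_of_hw U hw0 i hi
  · intro U' hsteps hrect
    have hinv : IsDiagram U' ∧ (∀ i d, 1 ≤ i → ¬ UnpairedUp U' i d) ∧ wt U' = wt U := by
      clear hrect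
      induction hsteps with
      | refl => exact ⟨hUdg, hw0, rfl⟩
      | tail hab hbc ih =>
        obtain ⟨c, hc, rfl⟩ := hbc
        obtain ⟨ih1, ih2, ih3⟩ := ih
        obtain ⟨p1, p2⟩ := rectify_hw _ c hc ih1 ih2
        exact ⟨p1, p2, (wt_rectify c _).trans ih3⟩
    obtain ⟨hg1, hg2, hg3⟩ := hinv
    have h4 := compDiagram_of_rect U' hg1 hrect hg2
    rw [hg3] at h4
    exact h4

end Kohnert
end

section
/- Let T be a diagram with labeling L. For every column c, the labeling L is flagged if and only if the rectified labeling R_c^*(L) of R_c^*(T) is flagged. -/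
/-!
Definitions for Kohnert diagrams, Kohnert crystals, rectification, Kohnert labelings,
Demazure characters and Kohnert polynomials, following Assaf,
"Demazure crystals for Kohnert polynomials".
-/

namespace Kohnert

/-! ### Auxiliary lemmas -/

lemma mem_colRows {T : Finset Cell} {c r : ℕ} : r ∈ colRows T c ↔ (c, r) ∈ T := by
  simp only [colRows, Finset.mem_image, Finset.mem_filter]
  constructor
  · rintro ⟨⟨a, b⟩, ⟨hm, rfl⟩, rfl⟩; exact hm
  · intro h; exact ⟨(c, r), ⟨h, rfl⟩, rfl⟩

lemma argmaxIn_mem {f : ℕ → ℕ} {s : Finset ℕ} {a : ℕ} (h : argmaxIn f s = some a) : a ∈ s := by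
  unfold argmaxIn at h
  split at h
  · next hs =>
    rw [Option.some_inj] at h
    subst h
    exact (Finset.mem_filter.1 (Finset.max'_mem _ _)).1
  · exact absurd h (by simp)

lemma labelPairList_spec (L : Labeling) (c : ℕ) :
    ∀ (rs : List ℕ) (avail : Finset ℕ) (r s : ℕ),
      (r, some s) ∈ labelPairList L c rs avail →
      r ≤ s ∧ L (c, s) ≤ L (c + 1, r) ∧ s ∈ avail := by
  intro rs
  induction rs with
  | nil => intro avail r s h; simp [labelPairList] at h
  | cons r0 rs ih =>
    intro avail r s h
    rw [labelPairList] at h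
    rcases hm : argmaxIn (fun s => L (c, s))
        (avail.filter fun s => r0 ≤ s ∧ L (c, s) ≤ L (c + 1, r0)) with _ | s0
    · rw [hm] at h
      simp only [List.mem_cons, Prod.mk.injEq] at h
      rcases h with ⟨_, h2⟩ | h
      · exact absurd h2 (by simp)
      · exact ih avail r s h
    · rw [hm] at h
      simp only [List.mem_cons, Prod.mk.injEq, Option.some_inj] at h
      rcases h with ⟨rfl, rfl⟩ | h
      · have := argmaxIn_mem hm
        rw [Finset.mem_filter] at this
        exact ⟨this.2.1, this.2.2, this.1⟩
      · obtain ⟨h1, h2, h3⟩ := ih _ r s h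
        exact ⟨h1, h2, Finset.mem_of_mem_erase h3⟩

lemma mem_of_lookup_eq_some {l : List (ℕ × Option ℕ)} {a : ℕ} {b : Option ℕ}
    (h : l.lookup a = some b) : (a, b) ∈ l := by
  induction l with
  | nil => simp [List.lookup] at h
  | cons p l ih =>
    obtain ⟨k, v⟩ := p
    rw [List.lookup] at h
    by_cases hk : a = k
    · subst hk
      simp at h
      simp [h]
    · have : (a == k) = false := by simpa using hk
      rw [this] at h
      exact List.mem_cons_of_mem _ (ih h)

lemma labelPartner_spec {L : Labeling} {T : Finset Cell} {c r t : ℕ}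
    (h : labelPartner L T c r = some t) :
    r ≤ t ∧ L (c, t) ≤ L (c + 1, r) ∧ (c, t) ∈ T := by
  unfold labelPartner at h
  rw [Option.join_eq_some_iff] at h
  have hmem := mem_of_lookup_eq_some h
  have := labelPairList_spec L c _ _ r t hmem
  exact ⟨this.1, this.2.1, mem_colRows.1 this.2.2⟩

lemma swapPass_flag_iff (L0 : Labeling) (T : Finset Cell) (c : ℕ)
    (hc0 : ∀ t, (c, t) ∈ T → t ≤ L0 (c, t)) :
    ∀ (rs : List ℕ) (L' : Labeling) (r : ℕ),
      r ≤ swapPass L0 T c rs L' (c + 1, r) ↔ r ≤ L' (c + 1, r) := by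
  intro rs
  induction rs with
  | nil => intro L' r; rw [swapPass]
  | cons r0 rs ih =>
    intro L' r
    rw [swapPass]
    rcases hm : argmaxIn (fun s => L' (c + 1, s)) ((colRows T (c + 1)).filter fun s =>
        r0 < s ∧ ∃ t ∈ colRows T c, labelPartner L0 T c s = some t ∧
          L0 (c, t) ≤ L' (c + 1, r0) ∧ L' (c + 1, r0) < L' (c + 1, s)) with _ | z
    · exact ih L' r
    · show r ≤ swapPass L0 T c rs
          (Function.update (Function.update L' (c + 1, r0) (L' (c + 1, z))) (c + 1, z)
            (L' (c + 1, r0))) (c + 1, r) ↔ r ≤ L' (c + 1, r)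
      have hz := argmaxIn_mem hm
      rw [Finset.mem_filter] at hz
      obtain ⟨hr0z, t, ht, hpart, hle, hlt⟩ := hz.2
      have hzt : z ≤ t := (labelPartner_spec hpart).1
      have htL : t ≤ L0 (c, t) := hc0 t (mem_colRows.1 ht)
      have hza : z ≤ L' (c + 1, r0) := le_trans (le_trans hzt htL) hle
      rw [ih]
      by_cases hrz : r = z
      · subst hrz
        simp only [Function.update_self]
        constructor
        · intro _; exact le_of_lt (lt_of_le_of_lt hza hlt)
        · intro _; exact hza
      · have hne : ((c + 1, r) : Cell) ≠ (c + 1, z) := by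
          simp [Prod.ext_iff, hrz]
        rw [Function.update_of_ne hne]
        by_cases hrr0 : r = r0
        · subst hrr0
          simp only [Function.update_self]
          constructor
          · intro _; exact le_trans (le_of_lt hr0z) hza
          · intro _
            exact le_trans (le_trans (le_of_lt hr0z) hza) (le_of_lt hlt)
        · have hne2 : ((c + 1, r) : Cell) ≠ (c + 1, r0) := by
            simp [Prod.ext_iff, hrr0]
          rw [Function.update_of_ne hne2]
lemma rectify_iter_inv (T : Finset Cell) (c n : ℕ) :
    (∀ x ∈ (rectify c)^[n] T, x ∈ T ∨ (x.1 = c ∧ (c + 1, x.2) ∈ T)) ∧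
    (∀ x ∈ T, x.1 ≠ c + 1 → x ∈ (rectify c)^[n] T) ∧
    (∀ r, (c + 1, r) ∈ T → (c + 1, r) ∈ (rectify c)^[n] T ∨
      ((c, r) ∈ (rectify c)^[n] T ∧ (c, r) ∉ T)) := by
  induction n with
  | zero => exact ⟨fun x hx => Or.inl hx, fun x hx _ => hx, fun r hr => Or.inl hr⟩
  | succ n ih =>
    rw [Function.iterate_succ_apply']
    set S := (rectify c)^[n] T with hS
    obtain ⟨h1, h2, h3⟩ := ih
    unfold rectify
    split
    · next hex =>
      set m := sInf {r | ColUnpaired S c r} with hm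
      have hmem : ColUnpaired S c m := Nat.sInf_mem hex
      obtain ⟨hm1, hm2, _⟩ := hmem
      have hcc : c ≠ c + 1 := (Nat.lt_succ_self c).ne
      have hm1T : (c + 1, m) ∈ T := by
        rcases h1 _ hm1 with h | h
        · exact h
        · exact absurd h.1 hcc.symm
      have hmT : (c, m) ∉ T := fun hcm => hm2 (h2 _ hcm hcc)
      refine ⟨?_, ?_, ?_⟩
      · intro x hx
        rcases Finset.mem_insert.1 hx with rfl | hx
        · exact Or.inr ⟨rfl, hm1T⟩
        · exact h1 _ (Finset.mem_of_mem_erase hx)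
      · intro x hx hxc
        refine Finset.mem_insert_of_mem (Finset.mem_erase.2 ⟨?_, h2 _ hx hxc⟩)
        intro h
        exact hxc (by rw [h])
      · intro r hr
        rcases h3 r hr with h | ⟨h, hnT⟩
        · by_cases hrm : r = m
          · subst hrm
            exact Or.inr ⟨Finset.mem_insert_self _ _, hmT⟩
          · refine Or.inl (Finset.mem_insert_of_mem (Finset.mem_erase.2 ⟨?_, h⟩))
            simp [Prod.ext_iff, hrm]
        · refine Or.inr ⟨Finset.mem_insert_of_mem (Finset.mem_erase.2 ⟨?_, h⟩), hnT⟩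
          simp [Prod.ext_iff, hcc]
    · exact ⟨h1, h2, h3⟩

lemma relabel_eq_of_ne {L : Labeling} {T : Finset Cell} {c : ℕ} {x : Cell}
    (h : x.1 ≠ c + 1 ∨ x ∉ T) : relabel L T c x = L x := by
  unfold relabel
  rw [if_neg]
  rintro ⟨h1, h2⟩
  rcases h with h | h
  · exact h h1
  · exact h h2

lemma relabel_flag_iff {L : Labeling} {T : Finset Cell} {c : ℕ}
    (hcol : ∀ t, (c, t) ∈ T → t ≤ L (c, t)) {r : ℕ} (hr : (c + 1, r) ∈ T) :
    (r ≤ relabel L T c (c + 1, r) ↔ r ≤ L (c + 1, r)) := by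
  unfold relabel
  rw [if_pos ⟨rfl, hr⟩]
  rcases hp : labelPartner L T c r with _ | t
  · exact swapPass_flag_iff L T c hcol _ L r
  · obtain ⟨h1, h2, h3⟩ := labelPartner_spec hp
    have := hcol t h3
    constructor
    · intro _; exact le_trans (le_trans h1 this) h2
    · intro _; exact le_trans h1 this
/-- **Lemma (flagged is preserved).** For a diagram `T` with labeling `L` and any column
`c ≥ 1`, `L` is flagged iff the rectified labeling `R_c^*(L)` of `R_c^*(T)` is
flagged. -/
theorem flagged_iff_flagged_rectifyStar (T : Finset Cell) (hT : IsDiagram T)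
    (L : Labeling) (c : ℕ) (hc : 1 ≤ c) :
    Flagged T L ↔ Flagged (rectifyStar c T) (rectifyStarLabel L T c) := by
  obtain ⟨h1, h2, h3⟩ := rectify_iter_inv T c T.card
  have hS : rectifyStar c T = (rectify c)^[T.card] T := rfl
  rw [← hS] at h1 h2 h3
  have hcc : c ≠ c + 1 := (Nat.lt_succ_self c).ne
  constructor
  · intro hF x hx
    have hcol : ∀ t, (c, t) ∈ T → t ≤ L (c, t) := fun t ht => hF _ ht
    unfold rectifyStarLabel
    split
    · next hcond =>
      obtain ⟨hxc, hxnT, hx2T, _⟩ := hcond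
      exact (relabel_flag_iff hcol hx2T).2 (hF _ hx2T)
    · next hcond =>
      have hxT : x ∈ T := by
        rcases h1 x hx with h | h
        · exact h
        · by_contra hxnT
          exact hcond ⟨h.1, hxnT, h.2, hx⟩
      by_cases hx1 : x.1 = c + 1
      · obtain ⟨a, b⟩ := x
        simp only at hx1
        subst hx1
        exact (relabel_flag_iff hcol hxT).2 (hF _ hxT)
      · rw [relabel_eq_of_ne (Or.inl hx1)]
        exact hF _ hxT
  · intro hF x hxT
    have hL2 : ∀ y ∈ T, y.1 ≠ c + 1 → rectifyStarLabel L T c y = L y := by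
      intro y hy hy1
      unfold rectifyStarLabel
      rw [if_neg (by rintro ⟨_, hn, _⟩; exact hn hy), relabel_eq_of_ne (Or.inl hy1)]
    have hcol : ∀ t, (c, t) ∈ T → t ≤ L (c, t) := by
      intro t ht
      have hmem : ((c, t) : Cell) ∈ rectifyStar c T := h2 _ ht hcc
      have := hF _ hmem
      rwa [hL2 _ ht hcc] at this
    by_cases hx1 : x.1 = c + 1
    · obtain ⟨a, b⟩ := x
      simp only at hx1
      subst hx1
      rcases h3 b hxT with h | ⟨h, hnT⟩
      · have := hF _ h
        have heq : rectifyStarLabel L T c (c + 1, b) = relabel L T c (c + 1, b) := by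
          unfold rectifyStarLabel
          rw [if_neg (by rintro ⟨hn, _⟩; exact hcc hn.symm)]
        rw [heq] at this
        exact (relabel_flag_iff hcol hxT).1 this
      · have := hF _ h
        have heq : rectifyStarLabel L T c (c, b) = relabel L T c (c + 1, b) := by
          unfold rectifyStarLabel
          rw [if_pos ⟨rfl, hnT, hxT, h⟩]
        rw [heq] at this
        exact (relabel_flag_iff hcol hxT).1 this
    · have := hF _ (h2 _ hxT hx1)
      rwa [hL2 _ hxT hx1] at this

end Kohnert
end
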